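/- arXiv:0704.0885 — 9 statements merged into one kernel-verified Lean document; each statement's English description precedes it below -/
import Mathlib

section
/- Let X be a uniform space and d a uniformly continuous pseudometric on X. Then every d-open subset of X is a cozero set of some bounded uniformly continuous real-valued function on X. -/
open Filter MeasureTheory Topology Set
open scoped Uniformity

/-- `d` is a pseudometric on `X`. -/
def IsPseudometric {X : Type*} (d : X → X → ℝ) : Prop :=
  (∀ x, d x x = 0) ∧ (∀ x y, d x y = d y x) ∧ (∀ x y, 0 ≤ d x y) ∧
    ∀ x y z, d x z ≤ d x y + d y z

/-- `Lip d`: functions bounded by 1 that are 1-Lipschitz for `d`. -/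
def Lip {X : Type*} (d : X → X → ℝ) : Set (X → ℝ) :=
  {f | (∀ x, |f x| ≤ 1) ∧ ∀ x x', |f x - f x'| ≤ d x x'}

/-- `U` is open in the (possibly non-Hausdorff) topology induced by the pseudometric `d`. -/
def DOpen {X : Type*} (d : X → X → ℝ) (U : Set X) : Prop :=
  ∀ x ∈ U, ∃ ε > 0, ∀ y, d x y < ε → y ∈ U

/-- `U` is a cozero set of a bounded uniformly continuous real function on `X`. -/
def IsCozero (X : Type*) [UniformSpace X] (U : Set X) : Prop :=
  ∃ f : X → ℝ, UniformContinuous f ∧ (∃ C, ∀ x, |f x| ≤ C) ∧ U = {x | f x ≠ 0}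

/-- The σ-algebra generated by the cozero sets of `X`. -/
def cozMS (X : Type*) [UniformSpace X] : MeasurableSpace X :=
  MeasurableSpace.generateFrom {U | IsCozero X U}

/-- The pseudometric topology of `d` is separable. -/
def DSeparable {X : Type*} (d : X → X → ℝ) : Prop :=
  ∃ D : Set X, D.Countable ∧ ∀ x : X, ∀ ε : ℝ, 0 < ε → ∃ p ∈ D, d x p < ε

/-- The cardinality of `A` has measure zero: every finite nonnegative countably additive
measure on the power set of `A` vanishing on singletons is zero. -/
def HasMeasureZero (A : Type*) : Prop :=
  ∀ m : @MeasureTheory.Measure A ⊤, @MeasureTheory.IsFiniteMeasure A ⊤ m →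
    (∀ a : A, m {a} = 0) → m Set.univ = 0

/-- `Y` is a uniformly discrete subset of the uniform space `X`. -/
def UniformlyDiscrete {X : Type*} [UniformSpace X] (Y : Set X) : Prop :=
  ∃ d : X → X → ℝ, IsPseudometric d ∧ (UniformContinuous fun p : X × X => d p.1 p.2) ∧
    ∃ ε > 0, ∀ y ∈ Y, ∀ y' ∈ Y, y ≠ y' → ε ≤ d y y'

/-- `X` is a uniform D-space. -/
def IsDSpace (X : Type*) [UniformSpace X] : Prop :=
  ∀ Y : Set X, UniformlyDiscrete Y → HasMeasureZero Y

/-- Distance from a point to a set. -/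
noncomputable def distSet {X : Type*} (d : X → X → ℝ) (S : Set X) (x : X) : ℝ :=
  sInf ((d x) '' S)

/-- `fS d S x = min 1 (d(x,S))`, with the convention `fS d ∅ = 1`. -/
noncomputable def fS {X : Type*} (d : X → X → ℝ) (S : Set X) (x : X) : ℝ :=
  @ite _ S.Nonempty (Classical.propDecidable _) (min 1 (distSet d S x)) 1

/-- every `d`-open set is a cozero set, for a u.c. pseudometric `d`. -/
theorem dOpen_isCozero {X : Type*} [UniformSpace X] (d : X → X → ℝ)
    (hd : IsPseudometric d) (hdu : UniformContinuous fun p : X × X => d p.1 p.2)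
    (U : Set X) (hU : DOpen d U) : IsCozero X U := by
  classical
  obtain ⟨hrefl, hsymm, hpos, htri⟩ := hd
  by_cases hne : (Uᶜ).Nonempty
  · -- key entourage lemma
    have key : ∀ ε : ℝ, 0 < ε → {p : X × X | d p.1 p.2 < ε} ∈ 𝓤 X := by
      intro ε hε
      have hW : {q : ℝ × ℝ | dist q.1 q.2 < ε} ∈ 𝓤 ℝ := Metric.dist_mem_uniformity hε
      have hm : Tendsto (fun p : X × X => ((p.1, p.1), (p.1, p.2))) (𝓤 X) (𝓤 (X × X)) := by
        rw [uniformity_prod]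
        refine tendsto_inf.2 ⟨tendsto_comap_iff.2 ?_, tendsto_comap_iff.2 ?_⟩
        · exact tendsto_diag_uniformity Prod.fst (𝓤 X)
        · exact tendsto_id
      have hdu' : Tendsto (fun q : (X × X) × (X × X) => (d q.1.1 q.1.2, d q.2.1 q.2.2))
          (𝓤 (X × X)) (𝓤 ℝ) := hdu
      have h2 := (hdu'.comp hm) hW
      filter_upwards [h2] with p hp
      simp only [Set.mem_preimage, Function.comp_apply, Set.mem_setOf_eq, hrefl,
        Real.dist_eq] at hp
      have := hpos p.1 p.2
      rw [abs_of_nonpos (by linarith)] at hp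
      simpa using hp
    set S := Uᶜ with hS
    have hbdd : ∀ x : X, BddBelow ((d x) '' S) := fun x =>
      ⟨0, by rintro _ ⟨z, hz, rfl⟩; exact hpos x z⟩
    have hnonneg : ∀ x, 0 ≤ distSet d S x := fun x =>
      Real.sInf_nonneg (by rintro _ ⟨z, hz, rfl⟩; exact hpos x z)
    have hle : ∀ x y, distSet d S x ≤ d x y + distSet d S y := by
      intro x y
      have h : distSet d S x - d x y ≤ distSet d S y := by
        apply le_csInf (hne.image _)
        rintro _ ⟨z, hz, rfl⟩
        have h1 : distSet d S x ≤ d x z := csInf_le (hbdd x) ⟨z, hz, rfl⟩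
        have h2 : d x z ≤ d x y + d y z := htri x y z
        linarith
      linarith
    have hmin : ∀ a b c : ℝ, 0 ≤ c → a ≤ c + b → min 1 a - min 1 b ≤ c := by
      intro a b c hc hab
      rcases le_total 1 b with h | h
      · have : min 1 a ≤ 1 := min_le_left _ _
        rw [min_eq_left h]; linarith
      · rw [min_eq_right h]
        have : min 1 a ≤ a := min_le_right _ _
        linarith
    have hlip : ∀ x y, |fS d S x - fS d S y| ≤ d x y := by
      intro x y
      simp only [fS, if_pos hne]
      rw [abs_sub_le_iff]
      constructor
      · exact hmin _ _ _ (hpos x y) (hle x y)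
      · have := hmin (distSet d S y) (distSet d S x) (d y x) (hpos y x) (hle y x)
        rw [hsymm y x] at this; exact this
    refine ⟨fS d S, ?_, ⟨1, fun x => ?_⟩, ?_⟩
    · rw [UniformContinuous, Metric.uniformity_basis_dist.tendsto_right_iff]
      intro ε hε
      filter_upwards [key ε hε] with p hp
      simp only [Set.mem_setOf_eq, Real.dist_eq]
      exact lt_of_le_of_lt (hlip p.1 p.2) hp
    · simp only [fS, if_pos hne]
      rw [abs_le]
      constructor
      · have := hnonneg x
        simp only [le_min_iff]
        constructor <;> linarith
      · exact min_le_left _ _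
    · ext x
      simp only [Set.mem_setOf_eq, fS, if_pos hne]
      constructor
      · intro hx
        obtain ⟨ε, hε, hball⟩ := hU x hx
        have hε' : min 1 ε ≤ distSet d S x := by
          apply le_csInf (hne.image _)
          rintro _ ⟨z, hz, rfl⟩
          have : ¬ d x z < ε := fun h => hz (hball z h)
          have : ε ≤ d x z := not_lt.1 this
          exact le_trans (min_le_right _ _) this
        have h1 : 0 < min 1 (distSet d S x) := by
          have : (0:ℝ) < min 1 ε := lt_min one_pos hε
          exact lt_of_lt_of_le this (le_min (min_le_left _ _) hε')
        exact ne_of_gt h1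
      · intro hx
        by_contra hxU
        have hxS : x ∈ S := hxU
        have h0 : distSet d S x ≤ 0 := by
          have := csInf_le (hbdd x) ⟨x, hxS, rfl⟩
          rwa [hrefl] at this
        have : distSet d S x = 0 := le_antisymm h0 (hnonneg x)
        apply hx
        rw [this]
        exact min_eq_right zero_le_one
  · refine ⟨fun _ => 1, uniformContinuous_const, ⟨1, fun x => by norm_num⟩, ?_⟩
    have hU' : U = Set.univ := by
      rw [Set.not_nonempty_iff_eq_empty, Set.compl_empty_iff] at hne
      exact hne
    simp [hU']
end

section
/- (A.H. Stone σ-discrete refinement for pseudometrics) Let d be a pseudometric on a set X and ε > 0. Then there exist collections W_n (n = 1, 2, …) of nonempty subsets of X such that: (1) the union ⋃_n W_n covers X; (2) every member of every W_n is open in the d-topology; (3) every member of W_n has d-diameter at most ε; (4) each W_n is uniformly d-discrete, i.e., there exists δ_n > 0 such that d(x,x') ≥ δ_n whenever x ∈ V, x' ∈ V' for distinct V, V' ∈ W_n. -/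
open Filter MeasureTheory Topology Set

noncomputable def stoneD {X : Type*} (d : X → X → ℝ) (ε : ℝ) (c : X → X) (n : ℕ) (s : X) :
    Set X :=
  {y | ∃ x, c x = s ∧ (∀ j, j < n → ∀ t, x ∉ stoneD d ε c j t) ∧
      (∀ z, d x z < 3 * (ε / 2 ^ (n + 3)) → d s z < ε / 2) ∧ d x y < ε / 2 ^ (n + 3)}
termination_by n

theorem mem_stoneD {X : Type*} (d : X → X → ℝ) (ε : ℝ) (c : X → X) (n : ℕ) (s : X) (y : X) :
    y ∈ stoneD d ε c n s ↔ ∃ x, c x = s ∧ (∀ j, j < n → ∀ t, x ∉ stoneD d ε c j t) ∧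
      (∀ z, d x z < 3 * (ε / 2 ^ (n + 3)) → d s z < ε / 2) ∧ d x y < ε / 2 ^ (n + 3) := by
  rw [stoneD]; exact Iff.rfl

/-- A.H. Stone σ-discrete refinement for pseudometrics. -/
theorem sigma_discrete_cover {X : Type*} (d : X → X → ℝ) (hd : IsPseudometric d)
    (ε : ℝ) (hε : 0 < ε) :
    ∃ W : ℕ → Set (Set X),
      (∀ x : X, ∃ n, ∃ V ∈ W n, x ∈ V) ∧
      (∀ n, ∀ V ∈ W n, V.Nonempty) ∧
      (∀ n, ∀ V ∈ W n, DOpen d V) ∧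
      (∀ n, ∀ V ∈ W n, ∀ x ∈ V, ∀ x' ∈ V, d x x' ≤ ε) ∧
      (∀ n, ∃ δ > 0, ∀ V ∈ W n, ∀ V' ∈ W n, V ≠ V' →
        ∀ x ∈ V, ∀ x' ∈ V', δ ≤ d x x') := by
  obtain ⟨hrefl, hsymm, hnn, htri⟩ := hd
  classical
  have wf : WellFounded (@WellOrderingRel X) := IsWellFounded.wf
  set r : ℕ → ℝ := fun n => ε / 2 ^ (n + 3) with hr_def
  have hr : ∀ n, 0 < r n := fun n => div_pos hε (by positivity)
  have hne : ∀ x : X, ({s | d s x < ε / 2} : Set X).Nonempty :=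
    fun x => ⟨x, by simp [hrefl x, half_pos hε]⟩
  set c : X → X := fun x => wf.min {s | d s x < ε / 2} (hne x) with hc_def
  have hc1 : ∀ x, d (c x) x < ε / 2 := fun x => wf.min_mem _ (hne x)
  have hc2 : ∀ x t, d t x < ε / 2 → ¬ WellOrderingRel t (c x) :=
    fun x t ht => wf.not_lt_min {s | d s x < ε / 2} ht
  refine ⟨fun n => {V | (∃ s, V = stoneD d ε c n s) ∧ V.Nonempty}, ?_, ?_, ?_, ?_, ?_⟩
  · -- cover
    intro x
    by_contra h
    push_neg at h
    have hnot : ∀ n t, x ∉ stoneD d ε c n t := by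
      intro n t hx
      exact h n (stoneD d ε c n t) ⟨⟨t, rfl⟩, ⟨x, hx⟩⟩ hx
    -- choose n with 3 * r n < ε/2 - d (c x) x
    have hpos : 0 < ε / 2 - d (c x) x := by linarith [hc1 x]
    obtain ⟨n, hn⟩ : ∃ n : ℕ, 3 * r n < ε / 2 - d (c x) x := by
      obtain ⟨n, hn⟩ : ∃ n : ℕ, ((1:ℝ)/2) ^ n < (ε / 2 - d (c x) x) / (3 * ε / 8) :=
        exists_pow_lt_of_lt_one (by positivity) (by norm_num)
      refine ⟨n, ?_⟩
      have h38 : (0:ℝ) < 3 * ε / 8 := by positivity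
      have h2 : ((1:ℝ)/2) ^ n * (3 * ε / 8) < ε / 2 - d (c x) x := by
        exact (lt_div_iff₀ h38).mp hn
      calc 3 * r n = ((1:ℝ)/2) ^ n * (3 * ε / 8) := by
            simp only [hr_def]
            rw [div_pow, one_pow, pow_add]
            ring
        _ < _ := h2
    have : x ∈ stoneD d ε c n (c x) := by
      rw [mem_stoneD]
      refine ⟨x, rfl, fun j _ t => hnot j t, fun z hz => ?_, by simp [hrefl x, hr n, hε]⟩
      calc d (c x) z ≤ d (c x) x + d x z := htri _ _ _
        _ < ε / 2 := by simp only [hr_def] at hn ⊢; linarith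
    exact hnot n (c x) this
  · -- nonempty
    exact fun n V hV => hV.2
  · -- open
    rintro n V ⟨⟨s, rfl⟩, -⟩ y hy
    rw [mem_stoneD] at hy
    obtain ⟨p, hp1, hp2, hp3, hp4⟩ := hy
    refine ⟨ε / 2 ^ (n + 3) - d p y, by linarith, fun z hz => ?_⟩
    rw [mem_stoneD]
    exact ⟨p, hp1, hp2, hp3, by linarith [htri p y z]⟩
  · -- diameter
    rintro n V ⟨⟨s, rfl⟩, -⟩ x hx x' hx'
    rw [mem_stoneD] at hx hx'
    obtain ⟨p, -, -, hp3, hp4⟩ := hx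
    obtain ⟨q, -, -, hq3, hq4⟩ := hx'
    have h1 : d s x < ε / 2 := hp3 x (by linarith [hr n])
    have h2 : d s x' < ε / 2 := hq3 x' (by linarith [hr n])
    calc d x x' ≤ d x s + d s x' := htri _ _ _
      _ = d s x + d s x' := by rw [hsymm x s]
      _ ≤ ε := by linarith
  · -- discrete
    intro n
    refine ⟨r n, hr n, ?_⟩
    rintro V ⟨⟨s, rfl⟩, -⟩ V' ⟨⟨t, rfl⟩, -⟩ hVV' x hx x' hx'
    have hst : s ≠ t := fun h => hVV' (by rw [h])
    rw [mem_stoneD] at hx hx'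
    obtain ⟨p, hp1, -, hp3, hp4⟩ := hx
    obtain ⟨q, hq1, -, hq3, hq4⟩ := hx'
    have hpq : ¬ d p q < 3 * (ε / 2 ^ (n + 3)) := by
      intro hlt
      rcases trichotomous_of WellOrderingRel s t with h | h | h
      · exact hc2 q s (hp3 q hlt) (hq1 ▸ h) 
      · exact hst h
      · have : d q p < 3 * (ε / 2 ^ (n + 3)) := by rwa [hsymm q p]
        exact hc2 p t (hq3 p this) (hp1 ▸ h)
    push_neg at hpq
    have := htri p x x'
    have := htri x x' q
    have h5 : d p q ≤ d p x + d x x' + d q x' := by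
      have := htri p x q
      have := htri x x' q
      have := hsymm x' q
      linarith
    simp only [hr_def]
    linarith
end

section
/- Let X be a uniform space, d a uniformly continuous pseudometric on X, and suppose d is separable (the pseudometric topology of d is separable). Then the set Lip(d) with the topology of pointwise convergence on X is metrizable; consequently every linear functional on the bounded uniformly continuous functions that is sequentially continuous on Lip(d) is continuous on Lip(d). -/
open Filter MeasureTheory Topology Set

/-- for a separable u.c. pseudometric `d`, `Lip d` with the pointwise
topology is metrizable; hence sequentially continuous linear functionals on `Lip d`
are continuous on `Lip d`. -/
theorem lip_metrizable_of_separable {X : Type*} [UniformSpace X] (d : X → X → ℝ)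
    (hd : IsPseudometric d) (hdu : UniformContinuous fun p : X × X => d p.1 p.2)
    (hsep : DSeparable d) :
    TopologicalSpace.MetrizableSpace ↥(Lip d) ∧
    ∀ μ : (X → ℝ) →ₗ[ℝ] ℝ,
      (∀ (f : ℕ → X → ℝ) (g : X → ℝ), (∀ n, f n ∈ Lip d) → g ∈ Lip d →
        (∀ x, Tendsto (fun n => f n x) atTop (𝓝 (g x))) →
        Tendsto (fun n => μ (f n)) atTop (𝓝 (μ g))) →
      ContinuousOn (fun f : X → ℝ => μ f) (Lip d) := by
  obtain ⟨D, hDc, hDd⟩ := hsep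
  haveI : Countable ↥D := hDc.to_subtype
  -- restriction map to the countable dense set
  set e : ↥(Lip d) → (↥D → ℝ) := fun f p => f.1 p.1 with he
  have hinj : Function.Injective e := by
    intro f g h
    have key : ∀ x : X, ∀ ε : ℝ, 0 < ε → |f.1 x - g.1 x| < ε := by
      intro x ε hε
      obtain ⟨p, hp, hdp⟩ := hDd x (ε / 2) (by linarith)
      have hpe : f.1 p = g.1 p := congrFun h ⟨p, hp⟩
      have h1 : |f.1 x - f.1 p| ≤ d x p := f.2.2 x p
      have h2 : |g.1 p - g.1 x| ≤ d p x := g.2.2 p x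
      have hs : d p x = d x p := hd.2.1 p x
      have habc : |f.1 x - g.1 x| ≤ |f.1 x - f.1 p| + |f.1 p - g.1 x| :=
        abs_sub_le _ _ _
      have habc2 : |f.1 p - g.1 x| = |g.1 p - g.1 x| := by rw [hpe]
      linarith
    apply Subtype.ext
    funext x
    have h0 : |f.1 x - g.1 x| ≤ 0 := by
      by_contra h'
      push_neg at h'
      exact lt_irrefl _ (key x _ h')
    have := abs_eq_zero.mp (le_antisymm h0 (abs_nonneg _))
    exact sub_eq_zero.mp this
  have hcont : Continuous e :=
    continuous_pi fun p => (continuous_apply p.1).comp continuous_subtype_val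
  have hind : Topology.IsInducing e := by
    constructor
    refine le_antisymm (continuous_iff_le_induced.mp hcont) ?_
    have ht1 : (instTopologicalSpaceSubtype : TopologicalSpace ↥(Lip d)) =
        ⨅ x : X, TopologicalSpace.induced (fun f : ↥(Lip d) => f.1 x)
          inferInstance := by
      simp only [instTopologicalSpaceSubtype, Pi.topologicalSpace, induced_iInf,
        induced_compose]
      rfl
    rw [ht1]
    refine le_iInf fun x => ?_
    rw [← continuous_iff_le_induced]
    letI tD : TopologicalSpace ↥(Lip d) := TopologicalSpace.induced e Pi.topologicalSpace
    rw [@continuous_iff_continuousAt _ _ tD _]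
    intro f
    rw [ContinuousAt, @nhds_induced]
    rw [Metric.tendsto_nhds]
    intro ε hε
    obtain ⟨p, hp, hdp⟩ := hDd x (ε / 3) (by linarith)
    have hmem : (fun h : ↥D → ℝ => h ⟨p, hp⟩) ⁻¹' Metric.ball (f.1 p) (ε / 3) ∈
        𝓝 (e f) := by
      have : e f ⟨p, hp⟩ = f.1 p := rfl
      exact (continuous_apply (⟨p, hp⟩ : ↥D)).continuousAt
        (Metric.ball_mem_nhds _ (by linarith))
    filter_upwards [Filter.preimage_mem_comap hmem] with g hg
    have hg' : |g.1 p - f.1 p| < ε / 3 := by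
      have := hg
      simp only [Set.mem_preimage, Metric.mem_ball, Real.dist_eq] at this
      exact this
    have h1 : |g.1 x - g.1 p| ≤ d x p := g.2.2 x p
    have h2 : |f.1 p - f.1 x| ≤ d p x := f.2.2 p x
    have hs : d p x = d x p := hd.2.1 p x
    have habc : |g.1 x - f.1 x| ≤ |g.1 x - g.1 p| + |g.1 p - f.1 x| := abs_sub_le _ _ _
    have habc2 : |g.1 p - f.1 x| ≤ |g.1 p - f.1 p| + |f.1 p - f.1 x| := abs_sub_le _ _ _
    rw [Real.dist_eq]
    linarith
  haveI hmetr : TopologicalSpace.MetrizableSpace ↥(Lip d) :=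
    (Topology.IsEmbedding.mk hind hinj).metrizableSpace
  refine ⟨hmetr, fun μ hseq => ?_⟩
  rw [continuousOn_iff_continuous_restrict]
  apply continuous_iff_seqContinuous.mpr
  intro F G hFG
  have hpw : ∀ x : X, Tendsto (fun n => (F n).1 x) atTop (𝓝 (G.1 x)) := by
    intro x
    have : Tendsto (fun n => (F n).1) atTop (𝓝 G.1) := tendsto_subtype_rng.mp hFG
    exact (tendsto_pi_nhds.mp this) x
  exact hseq (fun n => (F n).1) G.1 (fun n => (F n).2) G.2 hpw
end

section
/- Let X be a uniform space, d a uniformly continuous pseudometric on X, and (f_n) a sequence in Lip(d). Define d̃(x,y) = sup_n |f_n(x) - f_n(y)|. Then d̃ is a uniformly continuous pseudometric on X whose induced pseudometric topology is separable, and f_n ∈ Lip(d̃) for every n. -/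
open Filter MeasureTheory Topology Set

open scoped Uniformity

/-- `d̃(x,y) = sup_n |f n x - f n y|` is a separable uniformly continuous
pseudometric, and each `f n` belongs to `Lip d̃`. -/
theorem sup_pseudometric {X : Type*} [UniformSpace X] (d : X → X → ℝ)
    (hd : IsPseudometric d) (hdu : UniformContinuous fun p : X × X => d p.1 p.2)
    (f : ℕ → X → ℝ) (hf : ∀ n, f n ∈ Lip d)
    (h0 : ∀ x, Tendsto (fun n => f n x) atTop (𝓝 0))
    (dt : X → X → ℝ) (hdt : ∀ x y, dt x y = ⨆ n, |f n x - f n y|) :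
    IsPseudometric dt ∧ (UniformContinuous fun p : X × X => dt p.1 p.2) ∧
    DSeparable dt ∧ ∀ n, f n ∈ Lip dt := by
  obtain ⟨hd0, hdsymm, hdnn, hdtri⟩ := hd
  have hb : ∀ x y : X, ∀ n, |f n x - f n y| ≤ d x y := fun x y n => (hf n).2 x y
  have hbdd : ∀ x y : X, BddAbove (Set.range fun n => |f n x - f n y|) :=
    fun x y => ⟨d x y, by rintro r ⟨n, rfl⟩; exact hb x y n⟩
  have hle_d : ∀ x y, dt x y ≤ d x y := fun x y => by
    rw [hdt x y]; exact ciSup_le fun n => hb x y n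
  have h_le : ∀ x y : X, ∀ n, |f n x - f n y| ≤ dt x y := fun x y n => by
    rw [hdt x y]; exact le_ciSup (hbdd x y) n
  have hnn : ∀ x y, 0 ≤ dt x y := fun x y =>
    le_trans (abs_nonneg _) (h_le x y 0)
  have hsymm : ∀ x y, dt x y = dt y x := fun x y => by
    rw [hdt x y, hdt y x]; exact iSup_congr fun n => abs_sub_comm _ _
  have htri : ∀ x y z, dt x z ≤ dt x y + dt y z := fun x y z => by
    rw [hdt x z]
    refine ciSup_le fun n => ?_
    calc |f n x - f n z| ≤ |f n x - f n y| + |f n y - f n z| := abs_sub_le _ _ _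
      _ ≤ dt x y + dt y z := add_le_add (h_le x y n) (h_le y z n)
  have hself : ∀ x, dt x x = 0 := fun x =>
    le_antisymm (le_trans (hle_d x x) (le_of_eq (hd0 x))) (hnn x x)
  have hquad : ∀ x y x' y' : X, |dt x y - dt x' y'| ≤ dt x x' + dt y y' := by
    intro x y x' y'
    rw [abs_sub_le_iff]
    constructor
    · have h1 := htri x x' y
      have h2 := htri x' y' y
      have h3 := hsymm y' y
      linarith
    · have h1 := htri x' x y'
      have h2 := htri x y y'
      have h3 := hsymm x' x
      have h4 := hsymm y y'
      linarith
  have hKey : ∀ ε : ℝ, 0 < ε → {p : X × X | d p.1 p.2 < ε} ∈ 𝓤 X := by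
    intro ε hε
    have hK : Tendsto (fun p : X × X => ((p.1, p.1), (p.1, p.2))) (𝓤 X) (𝓤 (X × X)) := by
      rw [uniformity_prod]
      refine tendsto_inf.2 ⟨tendsto_comap_iff.2 ?_, tendsto_comap_iff.2 ?_⟩
      · exact tendsto_diag_uniformity Prod.fst (𝓤 X)
      · exact tendsto_id
    have hduT : Tendsto (fun q : (X × X) × (X × X) => (d q.1.1 q.1.2, d q.2.1 q.2.2))
        (𝓤 (X × X)) (𝓤 ℝ) := hdu
    have h2 := (Metric.uniformity_basis_dist.tendsto_right_iff).1 (hduT.comp hK) ε hε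
    filter_upwards [h2] with p hp
    simp only [Function.comp, Real.dist_eq] at hp
    have h00 : d p.1 p.1 = 0 := hd0 p.1
    rw [h00, zero_sub, abs_neg, abs_of_nonneg (hdnn _ _)] at hp
    exact hp
  have hUC : UniformContinuous fun p : X × X => dt p.1 p.2 := by
    refine Metric.uniformity_basis_dist.tendsto_right_iff.2 ?_
    intro ε hε
    have hV := hKey (ε/2) (by linarith)
    have hW : ((fun q : (X × X) × (X × X) => (q.1.1, q.2.1)) ⁻¹' {p : X × X | d p.1 p.2 < ε/2} ∩
        (fun q : (X × X) × (X × X) => (q.1.2, q.2.2)) ⁻¹' {p : X × X | d p.1 p.2 < ε/2}) ∈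
        𝓤 (X × X) := by
      rw [uniformity_prod]
      exact Filter.inter_mem (mem_inf_of_left (preimage_mem_comap hV))
        (mem_inf_of_right (preimage_mem_comap hV))
    filter_upwards [hW] with q hq
    have h1 : d q.1.1 q.2.1 < ε/2 := hq.1
    have h2 : d q.1.2 q.2.2 < ε/2 := hq.2
    have h3 := hquad q.1.1 q.1.2 q.2.1 q.2.2
    have h4 := hle_d q.1.1 q.2.1
    have h5 := hle_d q.1.2 q.2.2
    rw [Real.dist_eq]
    linarith
  have hSep : DSeparable dt := by
    classical
    set g : List ℚ → ℕ → ℝ := fun s n => ((s.getD n 0 : ℚ) : ℝ) with hgdef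
    set P : List ℚ × ℕ → Prop :=
      fun p => ∃ y : X, ∀ n, |f n y - g p.1 n| ≤ 1 / (p.2 + 1 : ℝ) with hPdef
    refine ⟨{x | ∃ p : List ℚ × ℕ, ∃ h : P p, x = h.choose}, ?_, ?_⟩
    · have : {x : X | ∃ p : List ℚ × ℕ, ∃ h : P p, x = h.choose} =
          ⋃ p : List ℚ × ℕ, {x | ∃ h : P p, x = h.choose} := by
        ext x; simp [Set.mem_iUnion]
      rw [this]
      refine Set.countable_iUnion fun p => Set.Subsingleton.countable ?_
      rintro a ⟨ha, rfl⟩ b ⟨hb, rfl⟩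
      rfl
    · intro x ε hε
      obtain ⟨k, hk⟩ := exists_nat_ge (3 / ε)
      set η : ℝ := 1 / (k + 1 : ℝ) with hηdef
      have hηpos : 0 < η := by positivity
      have hηε : η ≤ ε / 3 := by
        rw [hηdef, div_le_div_iff₀ (by positivity) (by norm_num : (0:ℝ) < 3)]
        have h3 : (3 : ℝ) ≤ (k : ℝ) * ε := (div_le_iff₀ hε).1 hk
        nlinarith
      obtain ⟨N, hN⟩ := Metric.tendsto_atTop.1 (h0 x) η hηpos
      have hN' : ∀ n ≥ N, |f n x| < η := by
        intro n hn
        have := hN n hn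
        rwa [Real.dist_eq, sub_zero] at this
      set qf : ℕ → ℚ := fun n => (exists_rat_near (f n x) hηpos).choose with hqfdef
      have hqf : ∀ n, |f n x - (qf n : ℝ)| < η :=
        fun n => (exists_rat_near (f n x) hηpos).choose_spec
      set s : List ℚ := (List.range N).map qf with hsdef
      have hgs : ∀ n, n < N → g s n = (qf n : ℝ) := by
        intro n hn
        simp [hgdef, hsdef, List.getD_eq_getElem?_getD, List.getElem?_range, hn]
      have hgs' : ∀ n, N ≤ n → g s n = 0 := by
        intro n hn
        have hlen : s.length ≤ n := by simp [hsdef, hn]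
        simp [hgdef, List.getD_eq_getElem?_getD, List.getElem?_eq_none hlen]
      have hx : ∀ n, |f n x - g s n| ≤ η := by
        intro n
        by_cases hn : n < N
        · rw [hgs n hn]; exact (hqf n).le
        · rw [hgs' n (le_of_not_gt hn), sub_zero]
          exact (hN' n (le_of_not_gt hn)).le
      have hP : P (s, k) := ⟨x, hx⟩
      refine ⟨hP.choose, ⟨(s, k), hP, rfl⟩, ?_⟩
      have hw : ∀ n, |f n hP.choose - g s n| ≤ η := hP.choose_spec
      have : dt x hP.choose ≤ 2 * η := by
        rw [hdt]
        refine ciSup_le fun n => ?_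
        calc |f n x - f n hP.choose|
            ≤ |f n x - g s n| + |g s n - f n hP.choose| := abs_sub_le _ _ _
          _ ≤ η + η := add_le_add (hx n) (by rw [abs_sub_comm]; exact hw n)
          _ = 2 * η := by ring
      linarith
  exact ⟨⟨hself, hsymm, hnn, htri⟩, hUC, hSep, fun n => ⟨(hf n).1, fun x x' => h_le x x' n⟩⟩
end

section
/- Let X be a uniform space and μ a bounded linear functional on the Banach space U_b(X) of bounded uniformly continuous real-valued functions. Then μ is sequentially continuous on Lip(d) (with the topology of pointwise convergence) for every uniformly continuous pseudometric d on X if and only if μ is continuous on Lip(d) for every separable uniformly continuous pseudometric d on X. -/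
open Filter MeasureTheory Topology Set
open Uniformity

lemma pseudo_abs_sub {X : Type*} {ρ : X → X → ℝ} (h : IsPseudometric ρ) (x y x' y' : X) :
    |ρ x y - ρ x' y'| ≤ ρ x x' + ρ y y' := by
  obtain ⟨h0, hsymm, hnn, htri⟩ := h
  rw [abs_sub_le_iff]
  constructor
  · have h1 := htri x x' y
    have h2 := htri x' y' y
    have h3 := hsymm y' y
    linarith
  · have h1 := htri x' x y'
    have h2 := htri x y y'
    have h3 := hsymm x' x
    linarith

lemma uc_pseudo_entourage {X : Type*} [UniformSpace X] {d : X → X → ℝ}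
    (hd : IsPseudometric d) (hdu : UniformContinuous fun p : X × X => d p.1 p.2)
    {ε : ℝ} (hε : 0 < ε) : ∃ V ∈ 𝓤 X, ∀ a b : X, (a, b) ∈ V → d a b < ε := by
  have hmem : {p : ℝ × ℝ | dist p.1 p.2 < ε} ∈ 𝓤 ℝ := Metric.dist_mem_uniformity hε
  have hW := hdu hmem
  rw [Filter.mem_map, uniformity_prod, Filter.mem_inf_iff_superset] at hW
  obtain ⟨t1, ht1, t2, ht2, hsub⟩ := hW
  obtain ⟨V1, hV1, hV1s⟩ := Filter.mem_comap.mp ht1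
  obtain ⟨V2, hV2, hV2s⟩ := Filter.mem_comap.mp ht2
  refine ⟨V1 ∩ V2, Filter.inter_mem hV1 hV2, fun a b hab => ?_⟩
  have hq : (((a, a), (a, b)) : (X × X) × (X × X)) ∈ t1 ∩ t2 := by
    constructor
    · exact hV1s (refl_mem_uniformity hV1 : (a, a) ∈ V1)
    · exact hV2s hab.2
  have := hsub hq
  simp only [Set.mem_preimage, Set.mem_setOf_eq] at this
  rw [Real.dist_eq, hd.1 a] at this
  calc d a b ≤ |0 - d a b| := by rw [zero_sub, abs_neg, abs_of_nonneg (hd.2.2.1 a b)]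
  _ < ε := this

lemma uc_of_le {X : Type*} [UniformSpace X] {d ρ : X → X → ℝ}
    (hd : IsPseudometric d) (hρ : IsPseudometric ρ)
    (hdu : UniformContinuous fun p : X × X => d p.1 p.2)
    (hle : ∀ x y, ρ x y ≤ d x y) :
    UniformContinuous fun p : X × X => ρ p.1 p.2 := by
  rw [UniformContinuous, Metric.uniformity_basis_dist.tendsto_right_iff]
  intro ε hε
  obtain ⟨V, hV, hVd⟩ := uc_pseudo_entourage hd hdu (half_pos hε)
  have hS : {p : (X × X) × (X × X) | (p.1.1, p.2.1) ∈ V ∧ (p.1.2, p.2.2) ∈ V} ∈ 𝓤 (X × X) := by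
    rw [uniformity_prod]
    exact Filter.inter_mem (Filter.mem_inf_of_left (Filter.preimage_mem_comap hV))
      (Filter.mem_inf_of_right (Filter.preimage_mem_comap hV))
  filter_upwards [hS] with p hp
  have h1 := pseudo_abs_sub hρ p.1.1 p.1.2 p.2.1 p.2.2
  have h2 := (hle p.1.1 p.2.1).trans_lt (hVd _ _ hp.1)
  have h3 := (hle p.1.2 p.2.2).trans_lt (hVd _ _ hp.2)
  have hnn1 := hρ.2.2.1 p.1.1 p.2.1
  have hnn2 := hρ.2.2.1 p.1.2 p.2.2
  simp only [Set.mem_setOf_eq, Real.dist_eq]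
  linarith

/-- a bounded linear functional on `U_b(X)` is sequentially continuous on
`Lip d` for every u.c. pseudometric `d` iff it is continuous (for nets) on `Lip d`
for every separable u.c. pseudometric `d`. -/
theorem seqCont_iff_cont_separable {X : Type u} [UniformSpace X]
    (μ : (X → ℝ) →ₗ[ℝ] ℝ)
    (hbdd : ∃ C : ℝ, ∀ f : X → ℝ, UniformContinuous f → ∀ B : ℝ,
      (∀ x, |f x| ≤ B) → |μ f| ≤ C * B) :
    (∀ d : X → X → ℝ, IsPseudometric d →
        (UniformContinuous fun p : X × X => d p.1 p.2) →
        ∀ f : ℕ → X → ℝ, (∀ n, f n ∈ Lip d) →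
          (∀ x, Tendsto (fun n => f n x) atTop (𝓝 0)) →
          Tendsto (fun n => μ (f n)) atTop (𝓝 0)) ↔
    (∀ d : X → X → ℝ, IsPseudometric d →
        (UniformContinuous fun p : X × X => d p.1 p.2) → DSeparable d →
        ∀ (ι : Type u) (pι : Preorder ι), IsDirected ι pι.le → Nonempty ι →
          ∀ f : ι → X → ℝ, (∀ i, f i ∈ Lip d) →
            (∀ x, Tendsto (fun i => f i x) (@Filter.atTop ι pι) (𝓝 0)) →
            Tendsto (fun i => μ (f i)) (@Filter.atTop ι pι) (𝓝 0)) := by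
  constructor
  · -- sequential continuity for all d  implies  net continuity for separable d
    intro h d hd hdu hsep ι pι hdir hne f hf hptw
    rcases isEmpty_or_nonempty X with hX | hX
    · have hf0 : ∀ i, f i = 0 := fun i => funext fun x => (IsEmpty.elim hX x)
      simp only [hf0, map_zero]
      exact tendsto_const_nhds
    · obtain ⟨D, hDc, hDd⟩ := hsep
      have hDne : D.Nonempty := by
        obtain ⟨x⟩ := hX
        obtain ⟨p, hp, -⟩ := hDd x 1 one_pos
        exact ⟨p, hp⟩
      obtain ⟨e, he⟩ := hDc.exists_eq_range hDne
      have key : ∀ ε : ℝ, 0 < ε → ∃ N : ℕ, ∃ δ : ℝ, 0 < δ ∧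
          ∀ g ∈ Lip d, (∀ k ≤ N, |g (e k)| ≤ δ) → |μ g| ≤ ε := by
        intro ε hε
        by_contra hc
        push_neg at hc
        choose g hg1 hg2 hg3 using fun n : ℕ => hc n (1/(n+1)) (by positivity)
        have hgz : ∀ x, Tendsto (fun n => g n x) atTop (𝓝 0) := by
          intro x
          rw [Metric.tendsto_atTop]
          intro η hη
          obtain ⟨p, hpD, hpd⟩ := hDd x (η/2) (by positivity)
          rw [he] at hpD
          obtain ⟨k, rfl⟩ := hpD
          obtain ⟨M, hM⟩ := exists_nat_one_div_lt (show (0:ℝ) < η/2 by positivity)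
          refine ⟨max k M, fun n hn => ?_⟩
          have hkn : k ≤ n := le_trans (le_max_left _ _) hn
          have hMn : M ≤ n := le_trans (le_max_right _ _) hn
          have h1 : |g n x - g n (e k)| ≤ d x (e k) := (hg1 n).2 x (e k)
          have h2 : |g n (e k)| ≤ 1/(n+1) := hg2 n k hkn
          have h3 : (1:ℝ)/(n+1) ≤ 1/(M+1) := by
            apply one_div_le_one_div_of_le (by positivity)
            have : (M:ℝ) ≤ n := Nat.cast_le.mpr hMn
            linarith
          have h4 : |g n x| ≤ |g n x - g n (e k)| + |g n (e k)| := by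
            calc |g n x| = |(g n x - g n (e k)) + g n (e k)| := by ring_nf
            _ ≤ _ := abs_add_le _ _
          rw [Real.dist_eq, sub_zero]
          linarith
        have htds := h d hd hdu g hg1 hgz
        rw [Metric.tendsto_atTop] at htds
        obtain ⟨N, hN⟩ := htds ε hε
        have hNN := hN N le_rfl
        rw [Real.dist_eq, sub_zero] at hNN
        exact absurd (hg3 N) (not_lt.mpr hNN.le)
      rw [Metric.tendsto_nhds]
      intro ε hε
      obtain ⟨N, δ, hδ, hkey⟩ := key (ε/2) (by positivity)
      have hev : ∀ᶠ i in @Filter.atTop ι pι, ∀ k ∈ Finset.range (N+1), |f i (e k)| ≤ δ := by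
        rw [Filter.eventually_all_finset]
        intro k _
        have hx := hptw (e k)
        rw [Metric.tendsto_nhds] at hx
        filter_upwards [hx δ hδ] with i hi
        rw [Real.dist_eq, sub_zero] at hi
        exact hi.le
      filter_upwards [hev] with i hi
      have hle : |μ (f i)| ≤ ε/2 :=
        hkey (f i) (hf i) (fun k hk => hi k (Finset.mem_range.mpr (Nat.lt_succ_of_le hk)))
      rw [Real.dist_eq, sub_zero]
      linarith
  · -- net continuity for separable d  implies  sequential continuity for all d
    intro h
    classical
    intro d hd hdu f hf hptw
    set ρ : X → X → ℝ := fun x y => ⨆ n, |f n x - f n y| with hρdef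
    have hbdd2 : ∀ x y : X, BddAbove (Set.range fun n => |f n x - f n y|) := by
      intro x y
      refine ⟨2, ?_⟩
      rintro r ⟨n, rfl⟩
      have h1 := (hf n).1 x
      have h2 := (hf n).1 y
      calc |f n x - f n y| ≤ |f n x| + |f n y| := abs_sub _ _
      _ ≤ 2 := by linarith
    have hρps : IsPseudometric ρ := by
      refine ⟨fun x => ?_, fun x y => ?_, fun x y => ?_, fun x y z => ?_⟩
      · simp [hρdef, sub_self, ciSup_const]
      · simp only [hρdef]
        congr 1
        ext n
        exact abs_sub_comm _ _
      · exact Real.iSup_nonneg fun n => abs_nonneg _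
      · exact ciSup_le fun n => (abs_sub_le _ _ _).trans
          (add_le_add (le_ciSup (hbdd2 x y) n) (le_ciSup (hbdd2 y z) n))
    have hle : ∀ x y, ρ x y ≤ d x y := fun x y => ciSup_le fun n => (hf n).2 x y
    have hρu : UniformContinuous fun p : X × X => ρ p.1 p.2 := uc_of_le hd hρps hdu hle
    have hflip : ∀ n, f n ∈ Lip ρ := fun n => ⟨(hf n).1, fun x y => le_ciSup (hbdd2 x y) n⟩
    -- separability
    have hsep : DSeparable ρ := by
      set q : List ℚ → ℕ → ℝ := fun s n => ((s.getD n 0 : ℚ) : ℝ) with hq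
      set P : List ℚ × ℕ → Prop := fun p => ∃ x : X, ∀ n, |f n x - q p.1 n| ≤ 1/(p.2+1) with hP
      refine ⟨Set.range (fun t : {p : List ℚ × ℕ // P p} => Classical.choose t.2),
        Set.countable_range _, ?_⟩
      intro x ε hε
      obtain ⟨k, hk⟩ := exists_nat_one_div_lt (show (0:ℝ) < ε/3 by linarith)
      have hklt : (0:ℝ) < 1/(k+1) := by positivity
      have hx := hptw x
      rw [Metric.tendsto_atTop] at hx
      obtain ⟨N, hN⟩ := hx (1/(k+1)) hklt
      choose r hr using fun i : Fin N => exists_rat_near (f i x) hklt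
      set s : List ℚ := List.ofFn r with hs
      have hxs : ∀ n, |f n x - q s n| ≤ 1/(k+1) := by
        intro n
        by_cases hn : n < N
        · have : q s n = (r ⟨n, hn⟩ : ℝ) := by
            simp [hq, hs, List.getD_eq_getElem?_getD, List.getElem?_ofFn, hn]
          rw [this]
          exact (hr ⟨n, hn⟩).le
        · have : q s n = 0 := by
            have hlen : s.length ≤ n := by simp [hs]; omega
            simp [hq, List.getD_eq_getElem?_getD, List.getElem?_eq_none hlen]
          rw [this, sub_zero]
          have := hN n (le_of_not_gt hn)
          rw [Real.dist_eq, sub_zero] at this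
          exact this.le
      have hsP : P (s, k) := ⟨x, hxs⟩
      set p : X := Classical.choose hsP with hp
      have hpspec : ∀ n, |f n p - q s n| ≤ 1/(k+1) := Classical.choose_spec hsP
      refine ⟨p, ⟨⟨(s, k), hsP⟩, rfl⟩, ?_⟩
      have hsup : ρ x p ≤ 2/(k+1) := by
        apply ciSup_le
        intro n
        calc |f n x - f n p| ≤ |f n x - q s n| + |q s n - f n p| := abs_sub_le _ _ _
        _ ≤ 1/(k+1) + 1/(k+1) := by
            refine add_le_add (hxs n) ?_
            rw [abs_sub_comm]
            exact hpspec n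
        _ = 2/(k+1) := by ring
      have h2k : 2/((k:ℝ)+1) < ε := by
        have : 2/((k:ℝ)+1) = 2 * (1/(k+1)) := by ring
        rw [this]; linarith
      linarith
    -- apply the hypothesis with ι = ULift ℕ
    have hdir : IsDirected (ULift.{u} ℕ) (· ≤ ·) := inferInstance
    have hdown : Tendsto (fun i : ULift.{u} ℕ => i.down) atTop atTop :=
      tendsto_atTop_atTop.2 fun b => ⟨⟨b⟩, fun a ha => ha⟩
    have hup : Tendsto (fun n : ℕ => (⟨n⟩ : ULift.{u} ℕ)) atTop atTop :=
      tendsto_atTop_atTop.2 fun b => ⟨b.down, fun a ha => ha⟩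
    have hmain := h ρ hρps hρu hsep (ULift.{u} ℕ) inferInstance hdir ⟨⟨0⟩⟩
      (fun i => f i.down) (fun i => hflip i.down)
      (fun x => (hptw x).comp hdown)
    exact hmain.comp hup
end

section
/- Let X be a uniform space in which the cardinality of every uniformly discrete subset has measure zero (X is a uniform D-space). Let m be a bounded nonnegative countably additive measure on the σ-algebra generated by the cozero sets of X, and define μ(f) = ∫ f dm for f ∈ U_b(X). Then μ is a uniform measure: for every uniformly continuous pseudometric d on X and every net (f_α) in Lip(d) converging pointwise to 0, we have μ(f_α) → 0. -/
open Filter MeasureTheory Topology Set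

set_option linter.unusedSectionVars false

open scoped Uniformity

section aux
variable {X : Type*} [UniformSpace X] {d : X → X → ℝ}

lemma dist_entourage (hd : IsPseudometric d)
    (hdu : UniformContinuous fun p : X × X => d p.1 p.2) {ε : ℝ} (hε : 0 < ε) :
    {p : X × X | d p.1 p.2 < ε} ∈ 𝓤 X := by
  have hball : {r : ℝ × ℝ | dist r.1 r.2 < ε} ∈ 𝓤 ℝ := Metric.dist_mem_uniformity hε
  have h2 := hdu hball
  rw [uniformity_prod_eq_prod] at h2
  rw [Filter.mem_map] at h2
  obtain ⟨u, hu, v, hv, huv⟩ := Filter.mem_prod_iff.mp h2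
  apply Filter.mem_of_superset hv
  rintro ⟨x, y⟩ hxy
  have h3 : ((x, x), (x, y)) ∈ u ×ˢ v := ⟨refl_mem_uniformity hu, hxy⟩
  have h4 := huv h3
  simp only [Set.mem_preimage, Set.mem_setOf_eq] at h4
  have : dist (d x x) (d x y) < ε := h4
  rw [hd.1 x, Real.dist_eq] at this
  have := abs_lt.mp this
  simp only [Set.mem_setOf_eq]
  linarith [this.1, this.2, hd.2.2.1 x y]

end aux

section aux2
variable {X : Type*} [UniformSpace X] {d : X → X → ℝ}

lemma uc_of_lip (hd : IsPseudometric d)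
    (hdu : UniformContinuous fun p : X × X => d p.1 p.2) {g : X → ℝ}
    (hg : ∀ x x', |g x - g x'| ≤ d x x') : UniformContinuous g := by
  rw [UniformContinuous]
  rw [Metric.uniformity_basis_dist.tendsto_right_iff]
  intro ε hε
  filter_upwards [dist_entourage hd hdu hε] with p hp
  calc dist (g p.1) (g p.2) = |g p.1 - g p.2| := Real.dist_eq _ _
    _ ≤ d p.1 p.2 := hg _ _
    _ < ε := hp

lemma cozMS_measurable_of_uc {g : X → ℝ} (hg : UniformContinuous g) :
    @Measurable X ℝ (cozMS X) _ g := by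
  have hsets : ∀ U ∈ {s : Set ℝ | IsOpen s}, MeasurableSet[cozMS X] (g ⁻¹' U) := by
    intro U hU
    replace hU : IsOpen U := hU
    rcases eq_or_ne Uᶜ ∅ with hUc | hUc
    · have : U = Set.univ := by
        rw [← Set.compl_empty, ← hUc, compl_compl]
      rw [this, Set.preimage_univ]
      exact MeasurableSet.univ
    · have hUcne : (Uᶜ : Set ℝ).Nonempty := Set.nonempty_iff_ne_empty.mpr hUc
      refine MeasurableSpace.measurableSet_generateFrom ⟨fun x => min (Metric.infDist (g x) Uᶜ) 1, ?_, ⟨1, fun x => ?_⟩, ?_⟩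
      · have h1 : LipschitzWith 1 (fun t : ℝ => min (Metric.infDist t Uᶜ) 1) :=
          (Metric.lipschitz_infDist_pt (Uᶜ : Set ℝ)).min_const 1
        exact h1.uniformContinuous.comp hg
      · rw [abs_le]
        constructor
        · have := Metric.infDist_nonneg (x := g x) (s := Uᶜ)
          simp only [le_min_iff]
          constructor <;> [linarith; norm_num]
        · exact min_le_right _ _
      · ext x
        simp only [Set.mem_preimage, Set.mem_setOf_eq]
        constructor
        · intro hx
          have hnm : g x ∉ Uᶜ := fun h => h hx
          have hpos : 0 < Metric.infDist (g x) Uᶜ :=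
            (hU.isClosed_compl.notMem_iff_infDist_pos hUcne).mp hnm
          exact ne_of_gt (lt_min hpos one_pos)
        · intro hne
          by_contra hc
          apply hne
          have hz : Metric.infDist (g x) Uᶜ = 0 :=
            (hU.isClosed_compl.mem_iff_infDist_zero hUcne).mp hc
          rw [hz]
          simp
  have key : @Measurable X ℝ (cozMS X) (MeasurableSpace.generateFrom {s : Set ℝ | IsOpen s}) g :=
    @measurable_generateFrom X ℝ (cozMS X) {s : Set ℝ | IsOpen s} g hsets
  have h2 : (inferInstance : MeasurableSpace ℝ) = MeasurableSpace.generateFrom {s : Set ℝ | IsOpen s} :=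
    BorelSpace.measurable_eq (α := ℝ)
  exact fun s hs => key (h2 ▸ hs)

end aux2

/-- open `r`-neighborhood of a set `S` w.r.t. the pseudometric `d`. -/
def nbhd {X : Type*} (d : X → X → ℝ) (r : ℝ) (S : Set X) : Set X :=
  {x | ∃ s ∈ S, d x s < r}

section aux3
variable {X : Type*} [UniformSpace X] {d : X → X → ℝ}

lemma nbhd_iUnion {ι : Sort*} (d : X → X → ℝ) (r : ℝ) (A : ι → Set X) :
    nbhd d r (⋃ i, A i) = ⋃ i, nbhd d r (A i) := by
  ext x
  simp only [nbhd, Set.mem_setOf_eq, Set.mem_iUnion]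
  constructor
  · rintro ⟨s, ⟨i, hi⟩, hs⟩
    exact ⟨i, s, hi, hs⟩
  · rintro ⟨i, s, hi, hs⟩
    exact ⟨s, ⟨i, hi⟩, hs⟩

lemma nbhd_empty (d : X → X → ℝ) (r : ℝ) : nbhd d r (∅ : Set X) = ∅ := by
  ext x; simp [nbhd]

lemma self_mem_nbhd (hd : IsPseudometric d) {r : ℝ} (hr : 0 < r) {S : Set X} {x : X}
    (hx : x ∈ S) : x ∈ nbhd d r S :=
  ⟨x, hx, by rw [hd.1 x]; exact hr⟩

lemma nbhd_measurable (hd : IsPseudometric d)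
    (hdu : UniformContinuous fun p : X × X => d p.1 p.2) (r : ℝ) (S : Set X) :
    MeasurableSet[cozMS X] (nbhd d r S) := by
  rcases S.eq_empty_or_nonempty with hS | hS
  · rw [hS, nbhd_empty]
    exact @MeasurableSet.empty X (cozMS X)
  · have hbdd : ∀ x : X, BddBelow ((d x) '' S) := by
      intro x
      exact ⟨0, fun t ⟨s, _, hs⟩ => hs ▸ hd.2.2.1 x s⟩
    have hne : ∀ x : X, ((d x) '' S).Nonempty := fun x => hS.image _
    have hlt : ∀ x : X, distSet d S x < r ↔ ∃ s ∈ S, d x s < r := by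
      intro x
      constructor
      · intro h
        obtain ⟨t, ⟨s, hsS, hst⟩, htr⟩ := (csInf_lt_iff (hbdd x) (hne x)).mp h
        exact ⟨s, hsS, hst ▸ htr⟩
      · rintro ⟨s, hsS, hsr⟩
        exact lt_of_le_of_lt (csInf_le (hbdd x) ⟨s, hsS, rfl⟩) hsr
    have hlip : ∀ x x' : X, |distSet d S x - distSet d S x'| ≤ d x x' := by
      intro x x'
      have one : ∀ a b : X, distSet d S a ≤ d a b + distSet d S b := by
        intro a b
        rw [distSet]
        have : ∀ t ∈ (d b) '' S, distSet d S a - d a b ≤ t := by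
          rintro t ⟨s, hsS, rfl⟩
          have h1 : distSet d S a ≤ d a s := csInf_le (hbdd a) ⟨s, hsS, rfl⟩
          have h2 : d a s ≤ d a b + d b s := hd.2.2.2 a b s
          linarith
        have := le_csInf (hne b) this
        rw [distSet] at *
        linarith
      rw [abs_sub_le_iff]
      constructor
      · have := one x x'; linarith
      · have := one x' x
        rw [hd.2.1 x' x] at this
        linarith
    set w : X → ℝ := fun x => max (r - distSet d S x) 0 with hw
    have hwuc : UniformContinuous w := by
      apply uc_of_lip hd hdu
      intro x x'
      have h1 : |(r - distSet d S x) - (r - distSet d S x')| ≤ d x x' := by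
        have := hlip x x'
        rw [show (r - distSet d S x) - (r - distSet d S x') = -(distSet d S x - distSet d S x') by ring, abs_neg]
        exact this
      calc |w x - w x'| ≤ |(r - distSet d S x) - (r - distSet d S x')| :=
            abs_max_sub_max_le_abs _ _ _
        _ ≤ d x x' := h1
    have : nbhd d r S = {x | w x ≠ 0} := by
      ext x
      simp only [nbhd, Set.mem_setOf_eq, hw]
      rw [← hlt x]
      constructor
      · intro h
        have : 0 < r - distSet d S x := by linarith
        have : 0 < max (r - distSet d S x) 0 := lt_max_of_lt_left this
        exact ne_of_gt this
      · intro h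
        by_contra hc
        push_neg at hc
        apply h
        rw [max_eq_right]
        linarith
    rw [this]
    apply MeasurableSpace.measurableSet_generateFrom
    exact ⟨w, hwuc, ⟨|r|, fun x => by
      show |max (r - distSet d S x) 0| ≤ |r|
      rcases le_or_gt (r - distSet d S x) 0 with h | h
      · rw [max_eq_right h]; simp [abs_nonneg]
      · rw [max_eq_left h.le, abs_of_pos h]
        have := hd.2.2.1 x
        have hds : 0 ≤ distSet d S x :=
          Real.sInf_nonneg (fun t ht => by obtain ⟨s, _, hs⟩ := ht; exact hs ▸ hd.2.2.1 x s)
        calc r - distSet d S x ≤ r := by linarith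
          _ ≤ |r| := le_abs_self r⟩, rfl⟩

end aux3

lemma key_lemma {X : Type*} [UniformSpace X] (hD : IsDSpace X)
    (m : @MeasureTheory.Measure X (cozMS X))
    (hfin : @MeasureTheory.IsFiniteMeasure X (cozMS X) m)
    (d : X → X → ℝ) (hd : IsPseudometric d)
    (hdu : UniformContinuous fun p : X × X => d p.1 p.2)
    {δ : ℝ} (hδ : 0 < δ) :
    ∃ C : Set X, C.Countable ∧ ∃ N : Set X, MeasurableSet[cozMS X] N ∧ m N = 0 ∧
      ∀ x ∉ N, ∃ p ∈ C, d x p < δ := by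
  letI : MeasurableSpace X := cozMS X
  haveI := hfin
  -- maximal δ-separated set
  obtain ⟨Y, hY⟩ := zorn_subset {Y : Set X | ∀ y ∈ Y, ∀ y' ∈ Y, y ≠ y' → δ ≤ d y y'}
    (fun c hc hchain => ⟨⋃₀ c, by
      rintro y ⟨s, hs, hys⟩ y' ⟨t, ht, hyt⟩ hne
      rcases hchain.total hs ht with hst | hts
      · exact hc ht y (hst hys) y' hyt hne
      · exact hc hs y hys y' (hts hyt) hne,
      fun s hs => Set.subset_sUnion_of_mem hs⟩)
  have hYsep : ∀ y ∈ Y, ∀ y' ∈ Y, y ≠ y' → δ ≤ d y y' := hY.1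
  have hcover : ∀ x : X, ∃ y ∈ Y, d x y < δ := by
    intro x
    by_contra hx
    push_neg at hx
    by_cases hxY : x ∈ Y
    · have := hx x hxY
      rw [hd.1 x] at this
      linarith
    · have hmem : insert x Y ∈ {Y : Set X | ∀ y ∈ Y, ∀ y' ∈ Y, y ≠ y' → δ ≤ d y y'} := by
        rintro y (rfl | hy) y' (rfl | hy') hne
        · exact absurd rfl hne
        · exact hx y' hy'
        · rw [hd.2.1]; exact hx y hy
        · exact hYsep y hy y' hy' hne
      have := hY.2 hmem (Set.subset_insert x Y)
      exact hxY (this (Set.mem_insert x Y))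
  -- well-order on Y
  haveI hwo : IsWellOrder ↥Y WellOrderingRel := WellOrderingRel.isWellOrder
  have hwf : WellFounded (WellOrderingRel : ↥Y → ↥Y → Prop) := hwo.toIsWellFounded.wf
  have hne : ∀ x : X, {z : ↥Y | d x ↑z < δ}.Nonempty := by
    intro x
    obtain ⟨y, hy, hlt⟩ := hcover x
    exact ⟨⟨y, hy⟩, hlt⟩
  set yf : X → ↥Y := fun x => hwf.min {z : ↥Y | d x ↑z < δ} (hne x) with hyf
  have hyf_lt : ∀ x, d x ↑(yf x) < δ := fun x => hwf.min_mem _ (hne x)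
  have hyf_min : ∀ x (z : ↥Y), d x ↑z < δ → ¬ WellOrderingRel z (yf x) :=
    fun x z hz => hwf.not_lt_min _ hz
  -- annuli
  set V : ↥Y → ℕ → Set X :=
    fun y k => {x | yf x = y ∧ δ - δ * (1/2)^k ≤ d x ↑y ∧ d x ↑y < δ - δ * (1/2)^(k+1)} with hV
  have hVk : ∀ x, ∃ k, x ∈ V (yf x) k := by
    intro x
    set t := d x ↑(yf x) with ht
    have ht0 : 0 ≤ t := hd.2.2.1 _ _
    have htδ : t < δ := hyf_lt x
    have hP : ∃ k : ℕ, t < δ - δ * (1/2)^(k+1) := by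
      obtain ⟨n, hn⟩ := exists_pow_lt_of_lt_one (show (0:ℝ) < (δ - t)/δ from div_pos (by linarith) hδ)
        (by norm_num : (1:ℝ)/2 < 1)
      refine ⟨n, ?_⟩
      have h1 : ((1:ℝ)/2)^(n+1) ≤ (1/2)^n := by
        apply pow_le_pow_of_le_one (by norm_num) (by norm_num)
        omega
      have h2 : δ * ((1:ℝ)/2)^n < δ - t := by
        have := mul_lt_mul_of_pos_left hn hδ
        rw [mul_div_cancel₀] at this
        · linarith [this]
        · exact ne_of_gt hδ
      nlinarith [h1, h2]
    refine ⟨Nat.find hP, ⟨rfl, ?_, Nat.find_spec hP⟩⟩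
    rcases Nat.eq_zero_or_pos (Nat.find hP) with h0 | hpos
    · rw [h0]
      simp only [pow_zero]
      linarith
    · have hmin := Nat.find_min hP (show Nat.find hP - 1 < Nat.find hP by omega)
      push_neg at hmin
      have hk1 : Nat.find hP - 1 + 1 = Nat.find hP := by omega
      rw [hk1] at hmin
      exact hmin
  -- disjointness of small neighborhoods of the annuli pieces
  have hVdisj : ∀ (k : ℕ) (y y' : ↥Y), y ≠ y' → ∀ x : X,
      x ∈ nbhd d (δ * (1/2)^(k+2)) (V y k) → x ∈ nbhd d (δ * (1/2)^(k+2)) (V y' k) → False := by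
    have ordered : ∀ (k : ℕ) (y y' : ↥Y), WellOrderingRel y y' → ∀ x : X,
        x ∈ nbhd d (δ * (1/2)^(k+2)) (V y k) → x ∈ nbhd d (δ * (1/2)^(k+2)) (V y' k) → False := by
      rintro k y y' hr x ⟨v, hv, hxv⟩ ⟨v', hv', hxv'⟩
      have h1 : ¬ d v' ↑y < δ := by
        intro h
        exact hyf_min v' y h (by rw [hv'.1]; exact hr)
      push_neg at h1
      have h2 : d v ↑y < δ - δ * (1/2)^(k+1) := hv.2.2
      have h3 : d v' ↑y ≤ d v' v + d v ↑y := hd.2.2.2 v' v ↑y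
      have h4 : d v' v ≤ d v' x + d x v := hd.2.2.2 v' x v
      have h5 : d v' x = d x v' := hd.2.1 v' x
      have hpow : ((1:ℝ)/2)^(k+1) = 2 * (1/2)^(k+2) := by
        rw [pow_succ]
        ring
      nlinarith [hxv, hxv']
    intro k y y' hne x hx hx'
    rcases trichotomous_of (WellOrderingRel : ↥Y → ↥Y → Prop) y y' with hr | heq | hr
    · exact ordered k y y' hr x hx hx'
    · exact hne heq
    · exact ordered k y' y hr x hx' hx
  -- per-scale argument
  have perk : ∀ k : ℕ, ∃ C : Set X, C.Countable ∧ ∃ Nk : Set X, MeasurableSet[cozMS X] Nk ∧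
      m Nk = 0 ∧ ∀ x, x ∈ V (yf x) k → x ∉ Nk → ↑(yf x) ∈ C := by
    intro k
    set ρ := δ * (1/2)^(k+2) with hρdef
    have hρ : 0 < ρ := by positivity
    set Y0 : Set ↥Y := {y | m (nbhd d ρ (V y k)) ≠ 0} with hY0
    have hY0c : Y0.Countable := by
      have := MeasureTheory.Measure.countable_meas_pos_of_disjoint_iUnion (μ := m)
        (As := fun y : ↥Y => nbhd d ρ (V y k))
        (fun y => nbhd_measurable hd hdu ρ (V y k))
        (fun y y' hne => Set.disjoint_left.mpr (fun x hx hx' => hVdisj k y y' hne x hx hx'))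
      apply this.mono
      intro y hy
      simp only [Set.mem_setOf_eq] at hy ⊢
      exact pos_iff_ne_zero.mpr hy
    set Yc : Set X := Subtype.val '' (Y0ᶜ) with hYc
    have hjmem : ∀ z : ↥Yc, (z : X) ∈ Y := by
      rintro ⟨z, a, _, rfl⟩
      exact a.2
    set j : ↥Yc → ↥Y := fun z => ⟨z, hjmem z⟩ with hj
    have hjnot : ∀ z : ↥Yc, j z ∉ Y0 := by
      rintro ⟨z, a, haY0, rfl⟩
      have : a = j ⟨↑a, a, haY0, rfl⟩ := Subtype.ext rfl
      rw [← this]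
      exact haY0
    have hjinj : ∀ z z' : ↥Yc, z ≠ z' → j z ≠ j z' := by
      intro z z' hne heq
      have hval : (z : X) = (z' : X) := congrArg (fun w : ↥Y => (w : X)) heq
      exact hne (Subtype.ext hval)
    set T : Set ↥Yc → Set X := fun s => ⋃ z ∈ s, V (j z) k with hT
    have hnbhdT : ∀ s : Set ↥Yc, nbhd d ρ (T s) = ⋃ z ∈ s, nbhd d ρ (V (j z) k) := by
      intro s
      have h1 : T s = ⋃ z : ↥Yc, ⋃ (_ : z ∈ s), V (j z) k := rfl
      rw [h1, nbhd_iUnion]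
      exact Set.iUnion_congr fun z => nbhd_iUnion d ρ _
    have hTmeas : ∀ s : Set ↥Yc, MeasurableSet[cozMS X] (nbhd d ρ (T s)) :=
      fun s => nbhd_measurable hd hdu ρ (T s)
    set ν : @MeasureTheory.Measure ↥Yc ⊤ :=
      @MeasureTheory.Measure.ofMeasurable ↥Yc ⊤ (fun s _ => m (nbhd d ρ (T s)))
        (by
          show m (nbhd d ρ (T ∅)) = 0
          have h1 : T ∅ = ∅ := by simp [hT]
          rw [h1, nbhd_empty]
          exact measure_empty)
        (by
          intro s hmeas hdisj
          show m (nbhd d ρ (T (⋃ i, s i))) = ∑' i, m (nbhd d ρ (T (s i)))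
          have hTU : T (⋃ i, s i) = ⋃ i, T (s i) := by
            simp only [hT]
            ext x
            simp [Set.mem_iUnion]
            tauto
          rw [hTU, nbhd_iUnion]
          apply measure_iUnion
          · intro i i' hii
            rw [Function.onFun, hnbhdT, hnbhdT]
            rw [Set.disjoint_left]
            simp only [Set.mem_iUnion]
            rintro x ⟨z, hz, hx⟩ ⟨z', hz', hx'⟩
            have hzz : z ≠ z' := by
              rintro rfl
              exact Set.disjoint_left.mp (hdisj hii) hz hz'
            exact hVdisj k (j z) (j z') (hjinj z z' hzz) x hx hx'
          · intro i
            exact hTmeas (s i))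
        with hν
    have hν_apply : ∀ s : Set ↥Yc, ν s = m (nbhd d ρ (T s)) := by
      intro s
      rw [hν]
      exact @MeasureTheory.Measure.ofMeasurable_apply ↥Yc ⊤ _ _ _ s MeasurableSpace.measurableSet_top
    haveI hνfin : @MeasureTheory.IsFiniteMeasure ↥Yc ⊤ ν := by
      constructor
      rw [hν_apply]
      exact lt_of_le_of_lt (measure_mono (Set.subset_univ _)) (measure_lt_top m Set.univ)
    have hνsing : ∀ z : ↥Yc, ν {z} = 0 := by
      intro z
      rw [hν_apply]
      have h1 : T {z} = V (j z) k := by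
        show (⋃ z' ∈ ({z} : Set ↥Yc), V (j z') k) = V (j z) k
        exact Set.biUnion_singleton _ _
      rw [h1]
      have h2 : ¬ m (nbhd d ρ (V (j z) k)) ≠ 0 := hjnot z
      exact not_not.mp h2
    have hYcdisc : UniformlyDiscrete Yc := by
      refine ⟨d, hd, hdu, δ, hδ, ?_⟩
      rintro y ⟨a, _, rfl⟩ y' ⟨a', _, rfl⟩ hne
      exact hYsep _ a.2 _ a'.2 hne
    have hzero : ν Set.univ = 0 := hD Yc hYcdisc ν hνfin hνsing
    rw [hν_apply] at hzero
    refine ⟨Subtype.val '' Y0, hY0c.image _, nbhd d ρ (T Set.univ), hTmeas _, hzero, ?_⟩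
    intro x hxV hxN
    by_contra hc
    have hY0' : yf x ∉ Y0 := by
      intro hmem
      exact hc ⟨yf x, hmem, rfl⟩
    have hzYc : (↑(yf x) : X) ∈ Yc := ⟨yf x, hY0', rfl⟩
    set z : ↥Yc := ⟨↑(yf x), hzYc⟩ with hz
    have hjz : j z = yf x := Subtype.ext rfl
    apply hxN
    have hxT : x ∈ T Set.univ := by
      rw [hT]
      simp only [Set.mem_iUnion]
      exact ⟨z, trivial, by rw [hjz]; exact hxV⟩
    exact self_mem_nbhd hd hρ hxT
  choose C hCc N hNm hN0 hNs using perk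
  refine ⟨⋃ k, C k, Set.countable_iUnion hCc, ⋃ k, N k, MeasurableSet.iUnion hNm,
    measure_iUnion_null hN0, ?_⟩
  intro x hx
  obtain ⟨k, hk⟩ := hVk x
  have hxk : x ∉ N k := fun h => hx (Set.mem_iUnion.2 ⟨k, h⟩)
  exact ⟨↑(yf x), Set.mem_iUnion.2 ⟨k, hNs k x hk hxk⟩, hyf_lt x⟩

/-- on a uniform D-space, integration against a finite countably additive
measure on `σ(Coz X)` is a uniform measure. -/
theorem dspace_measure_is_uniform {X : Type u} [UniformSpace X] (hD : IsDSpace X)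
    (m : @MeasureTheory.Measure X (cozMS X))
    (hfin : @MeasureTheory.IsFiniteMeasure X (cozMS X) m)
    (d : X → X → ℝ) (hd : IsPseudometric d)
    (hdu : UniformContinuous fun p : X × X => d p.1 p.2)
    (ι : Type v) [Preorder ι] [IsDirected ι (· ≤ ·)] [Nonempty ι]
    (f : ι → X → ℝ) (hf : ∀ i, f i ∈ Lip d)
    (h0 : ∀ x, Tendsto (fun i => f i x) atTop (𝓝 0)) :
    Tendsto (fun i => ∫ x, f i x ∂m) atTop (𝓝 0) := by
  letI : MeasurableSpace X := cozMS X
  haveI := hfin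
  rcases isEmpty_or_nonempty X with hX | hX
  · have hm0 : ∀ i, (∫ x, f i x ∂m) = 0 := by
      intro i
      have : m = 0 := Subsingleton.elim m 0
      rw [this]
      exact integral_zero_measure _
    simpa [hm0] using tendsto_const_nhds (α := ℝ) (f := atTop (α := ι))
  obtain ⟨x₀⟩ := hX
  -- strongly measurable
  have hfm : ∀ i, AEStronglyMeasurable (f i) m := by
    intro i
    have huc : UniformContinuous (f i) := uc_of_lip hd hdu (hf i).2
    exact (cozMS_measurable_of_uc huc).stronglyMeasurable.aestronglyMeasurable
  by_contra hcon
  have hnt : ∃ ε > 0, ∃ᶠ i in atTop, ε ≤ ‖∫ x, f i x ∂m‖ := by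
    by_contra h
    push_neg at h
    apply hcon
    rw [NormedAddCommGroup.tendsto_nhds_zero]
    intro ε hε
    have h2 := h ε hε
    filter_upwards [h2] with i hi
    exact hi
  obtain ⟨ε, hε, hfreq⟩ := hnt
  -- key lemma at all scales
  have hkey : ∀ k : ℕ, ∃ C : Set X, C.Countable ∧ ∃ N : Set X, MeasurableSet[cozMS X] N ∧
      m N = 0 ∧ ∀ x ∉ N, ∃ p ∈ C, d x p < 1/(k+1) := by
    intro k
    exact key_lemma hD m hfin d hd hdu (by positivity)
  choose C hCc N hNm hN0 hNd using hkey
  set Nall : Set X := ⋃ k, N k with hNall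
  have hNall0 : m Nall = 0 := measure_iUnion_null hN0
  set D : Set X := insert x₀ (⋃ k, C k) with hD2
  have hDc : D.Countable := ((Set.countable_iUnion hCc).insert x₀)
  obtain ⟨e, he⟩ := hDc.exists_eq_range (Set.insert_nonempty _ _)
  -- extract a sequence
  have hsel : ∀ n : ℕ, ∃ i : ι, ε ≤ ‖∫ x, f i x ∂m‖ ∧ ∀ j ≤ n, |f i (e j)| < 1/(n+1) := by
    intro n
    have hev : ∀ᶠ i in atTop, ∀ j ∈ Finset.range (n+1), |f i (e j)| < 1/(n+1) := by
      rw [Filter.eventually_all_finset]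
      intro j _
      have h1 := Metric.tendsto_nhds.mp (h0 (e j)) (1/(n+1)) (by positivity)
      filter_upwards [h1] with i hi
      simpa [Real.dist_eq] using hi
    obtain ⟨i, hi1, hi2⟩ := (hfreq.and_eventually hev).exists
    exact ⟨i, hi1, fun j hj => hi2 j (Finset.mem_range.2 (Nat.lt_succ_of_le hj))⟩
  choose idx hidx1 hidx2 using hsel
  -- pointwise convergence off Nall
  have hpt : ∀ x, x ∉ Nall → Tendsto (fun n => f (idx n) x) atTop (𝓝 0) := by
    intro x hx
    rw [Metric.tendsto_nhds]
    intro θ hθ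
    obtain ⟨k, hk⟩ := exists_nat_one_div_lt (half_pos hθ)
    have hxk : x ∉ N k := fun h => hx (Set.mem_iUnion.2 ⟨k, h⟩)
    obtain ⟨p, hpC, hpd⟩ := hNd k x hxk
    have hpD : p ∈ D := Set.mem_insert_of_mem _ (Set.mem_iUnion.2 ⟨k, hpC⟩)
    rw [he] at hpD
    obtain ⟨jp, hjp⟩ := hpD
    filter_upwards [eventually_ge_atTop jp, eventually_ge_atTop k] with n hnj hnk
    have hlip := (hf (idx n)).2 x p
    have hval : |f (idx n) (e jp)| < 1/(n+1) := hidx2 n jp hnj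
    rw [hjp] at hval
    have h1n : (1:ℝ)/(n+1) ≤ 1/(k+1) := by
      apply one_div_le_one_div_of_le
      · positivity
      · push_cast
        have : (k:ℝ) ≤ n := Nat.cast_le.mpr hnk
        linarith
    rw [Real.dist_eq, sub_zero]
    have habs : |f (idx n) x| ≤ |f (idx n) p| + |f (idx n) x - f (idx n) p| := by
      calc |f (idx n) x| = |f (idx n) p + (f (idx n) x - f (idx n) p)| := by ring_nf
        _ ≤ |f (idx n) p| + |f (idx n) x - f (idx n) p| := abs_add_le _ _
    calc |f (idx n) x| ≤ |f (idx n) p| + |f (idx n) x - f (idx n) p| := habs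
      _ ≤ 1/(n+1) + d x p := by
          apply add_le_add (le_of_lt hval) hlip
      _ < θ/2 + θ/2 := by
          apply add_lt_add
          · exact lt_of_le_of_lt h1n hk
          · exact lt_of_lt_of_le hpd (le_of_lt hk)
      _ = θ := by ring
  -- almost everywhere convergence
  have hae : ∀ᵐ x ∂m, Tendsto (fun n => f (idx n) x) atTop (𝓝 (0:ℝ)) := by
    rw [MeasureTheory.ae_iff]
    apply measure_mono_null _ hNall0
    intro x hx
    simp only [Set.mem_setOf_eq] at hx
    by_contra hc
    exact hx (hpt x hc)
  -- dominated convergence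
  have hdct := MeasureTheory.tendsto_integral_of_dominated_convergence (μ := m)
    (F := fun n => f (idx n)) (f := fun _ => (0:ℝ)) (bound := fun _ => 1)
    (fun n => hfm (idx n)) (MeasureTheory.integrable_const 1)
    (fun n => Filter.Eventually.of_forall fun x => by
      simpa [Real.norm_eq_abs] using (hf (idx n)).1 x)
    hae
  rw [MeasureTheory.integral_zero] at hdct
  have hnorm : Tendsto (fun n => ‖∫ x, f (idx n) x ∂m‖) atTop (𝓝 0) := by
    have := hdct.norm
    simpa using this
  have : ε ≤ 0 := ge_of_tendsto' hnorm (fun n => hidx1 n)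
  linarith
end

section
/- Let X be a uniform space that is not a uniform D-space, i.e., X contains a uniformly discrete subset whose cardinality does not have measure zero. Then there exists a bounded countably additive measure m on the σ-algebra generated by the cozero sets of X such that the functional μ(f) = ∫ f dm on U_b(X) is not a uniform measure: there is a uniformly continuous pseudometric d on X and a net in Lip(d) converging pointwise to 0 on which μ does not converge to 0. -/
open Filter MeasureTheory Topology Set

section AuxLemmas

open scoped Uniformity

variable {X : Type*}

lemma min1_sub (a b : ℝ) : min 1 a - min 1 b ≤ |a - b| := by
  rcases le_total 1 b with hb | hb
  · have h1 : min 1 a ≤ 1 := min_le_left _ _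
    have h2 : (1 : ℝ) ≤ min 1 b := le_min le_rfl hb
    have h3 := abs_nonneg (a - b)
    linarith
  · have h2 : min 1 b = b := min_eq_right hb
    have h1 : min 1 a ≤ a := min_le_right _ _
    have h3 := le_abs_self (a - b)
    linarith

lemma abs_min1 (a b : ℝ) : |min 1 a - min 1 b| ≤ |a - b| := by
  refine abs_le.2 ⟨?_, min1_sub a b⟩
  have := min1_sub b a
  rw [abs_sub_comm] at this
  linarith

lemma distSet_le (d : X → X → ℝ) (hnn : ∀ x y, 0 ≤ d x y) {S : Set X} {s : X} (hs : s ∈ S)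
    (x : X) : distSet d S x ≤ d x s :=
  csInf_le ⟨0, by rintro b ⟨t, -, rfl⟩; exact hnn x t⟩ (Set.mem_image_of_mem _ hs)

lemma distSet_nonneg (d : X → X → ℝ) (hnn : ∀ x y, 0 ≤ d x y) {S : Set X} (hS : S.Nonempty)
    (x : X) : 0 ≤ distSet d S x :=
  le_csInf (hS.image _) (by rintro b ⟨t, -, rfl⟩; exact hnn x t)

lemma distSet_tri (d : X → X → ℝ) (hd : IsPseudometric d) {S : Set X} (hS : S.Nonempty)
    (x y : X) : distSet d S x ≤ d x y + distSet d S y := by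
  obtain ⟨h0, hsymm, hnn, htri⟩ := hd
  have key : ∀ b ∈ (d y) '' S, distSet d S x - d x y ≤ b := by
    rintro b ⟨t, ht, rfl⟩
    have h1 := distSet_le d hnn ht x
    have h2 := htri x y t
    linarith
  have h3 : distSet d S x - d x y ≤ distSet d S y := le_csInf (hS.image _) key
  linarith

lemma distSet_abs (d : X → X → ℝ) (hd : IsPseudometric d) {S : Set X} (hS : S.Nonempty)
    (x y : X) : |distSet d S x - distSet d S y| ≤ d x y := by
  have h1 := distSet_tri d hd hS x y
  have h2 := distSet_tri d hd hS y x
  rw [hd.2.1 y x] at h2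
  exact abs_le.2 ⟨by linarith, by linarith⟩

lemma distSet_mono (d : X → X → ℝ) (hnn : ∀ x y, 0 ≤ d x y) {S T : Set X} (hS : S.Nonempty)
    (hST : S ⊆ T) (x : X) : distSet d T x ≤ distSet d S x :=
  le_csInf (hS.image _) (by rintro b ⟨t, ht, rfl⟩; exact distSet_le d hnn (hST ht) x)

lemma d_entourage [UniformSpace X] {d : X → X → ℝ} (hd : IsPseudometric d)
    (hduc : UniformContinuous fun p : X × X => d p.1 p.2) {δ : ℝ} (hδ : 0 < δ) :
    {p : X × X | d p.1 p.2 < δ} ∈ 𝓤 X := by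
  obtain ⟨hd0, hdsymm, hdnn, -⟩ := hd
  have hV : {p : ℝ × ℝ | dist p.1 p.2 < δ} ∈ 𝓤 ℝ := Metric.dist_mem_uniformity hδ
  have hW := Filter.mem_map.1 (hduc hV)
  rw [uniformity_prod] at hW
  obtain ⟨t₁, ht₁, t₂, ht₂, hsub⟩ := Filter.mem_inf_iff.1 hW
  obtain ⟨U₁, hU₁, hU₁s⟩ := Filter.mem_comap.1 ht₁
  obtain ⟨U₂, hU₂, hU₂s⟩ := Filter.mem_comap.1 ht₂
  have hswap : Prod.swap ⁻¹' U₂ ∈ 𝓤 X := Filter.mem_map.1 (tendsto_swap_uniformity hU₂)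
  refine Filter.mem_of_superset hswap ?_
  rintro ⟨x, y⟩ hp
  have hq : ((x, y), (x, x)) ∈
      (fun q : (X × X) × X × X => ((d q.1.1 q.1.2, d q.2.1 q.2.2) : ℝ × ℝ)) ⁻¹'
        {p : ℝ × ℝ | dist p.1 p.2 < δ} := by
    rw [hsub]
    exact ⟨hU₁s (refl_mem_uniformity hU₁), hU₂s hp⟩
  have hq' : dist (d x y) (d x x) < δ := hq
  rw [hd0 x, Real.dist_eq, sub_zero, abs_of_nonneg (hdnn x y)] at hq'
  exact hq'

lemma uc_of_lip_s7 [UniformSpace X] {d : X → X → ℝ} (hd : IsPseudometric d)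
    (hduc : UniformContinuous fun p : X × X => d p.1 p.2) {h : X → ℝ} {K : ℝ} (hK : 0 < K)
    (hlip : ∀ x y, |h x - h y| ≤ K * d x y) : UniformContinuous h := by
  rw [uniformContinuous_def]
  intro r hr
  obtain ⟨δ, hδ, hδr⟩ := Metric.mem_uniformity_dist.1 hr
  have hU := d_entourage hd hduc (div_pos hδ hK)
  refine Filter.mem_of_superset hU ?_
  rintro ⟨x, y⟩ hp
  apply hδr
  have h1 : dist (h x) (h y) ≤ K * d x y := by rw [Real.dist_eq]; exact hlip x y
  have h2 : K * d x y < K * (δ / K) := mul_lt_mul_of_pos_left hp hK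
  have h3 : K * (δ / K) = δ := by field_simp
  simp only [Set.mem_setOf_eq] at *
  linarith

lemma uc_measurable [UniformSpace X] {f : X → ℝ} (hf : UniformContinuous f)
    {C : ℝ} (hC : ∀ x, |f x| ≤ C) : @Measurable X ℝ (cozMS X) _ f := by
  letI := cozMS X
  apply measurable_of_Ioi
  intro a
  have heq : f ⁻¹' Set.Ioi a = {x | (f x - a) + |f x - a| ≠ 0} := by
    ext x
    simp only [Set.mem_preimage, Set.mem_Ioi, Set.mem_setOf_eq]
    constructor
    · intro hx h
      rw [abs_of_pos (by linarith : (0:ℝ) < f x - a)] at h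
      linarith
    · intro hx
      by_contra h2
      push_neg at h2
      exact hx (by rw [abs_of_nonpos (by linarith : f x - a ≤ 0)]; ring)
  rw [heq]
  apply MeasurableSpace.measurableSet_generateFrom
  refine ⟨fun x => (f x - a) + |f x - a|,
    ((hf.sub uniformContinuous_const).add
      (Real.uniformContinuous_abs.comp (hf.sub uniformContinuous_const))),
    ⟨2 * (C + |a|), ?_⟩, rfl⟩
  intro x
  have h1 := abs_le.1 (hC x)
  have h2 := le_abs_self a
  have h3 := neg_abs_le a
  have h4 : |f x - a| ≤ C + |a| := abs_le.2 ⟨by linarith, by linarith⟩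
  have h5 := abs_add_le (f x - a) |f x - a|
  rw [abs_abs] at h5
  linarith

lemma integral_map_indicator {X A : Type*} [mX : MeasurableSpace X] [mA : MeasurableSpace A]
    (ν : MeasureTheory.Measure A) {j : A → X} (hj : Measurable j) {f : X → ℝ}
    (hf : Measurable f) {s : Set A} (hs : MeasurableSet s)
    (hfj : ∀ a, f (j a) = s.indicator (fun _ => (1 : ℝ)) a) :
    ∫ x, f x ∂(ν.map j) = (ν s).toReal := by
  rw [integral_map hj.aemeasurable hf.aestronglyMeasurable]
  rw [show (fun a => f (j a)) = s.indicator (fun _ => (1 : ℝ)) from funext hfj]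
  rw [integral_indicator_const _ hs, smul_eq_mul, mul_one]
  rfl

end AuxLemmas

/-- if `X` has a uniformly discrete subset whose cardinality does not have
measure zero, then some finite countably additive measure on `σ(Coz X)` integrates to a
functional that is not a uniform measure. -/
theorem not_dspace_gives_nonuniform_measure {X : Type u} [UniformSpace X]
    (h : ∃ Y : Set X, UniformlyDiscrete Y ∧ ¬ HasMeasureZero Y) :
    ∃ m : @MeasureTheory.Measure X (cozMS X),
      @MeasureTheory.IsFiniteMeasure X (cozMS X) m ∧
      ∃ d : X → X → ℝ, IsPseudometric d ∧
        (UniformContinuous fun p : X × X => d p.1 p.2) ∧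
        ∃ (ι : Type u) (pι : Preorder ι), IsDirected ι pι.le ∧ Nonempty ι ∧
          ∃ f : ι → X → ℝ, (∀ i, f i ∈ Lip d) ∧
            (∀ x, Tendsto (fun i => f i x) (@Filter.atTop ι pι) (𝓝 0)) ∧
            ¬ Tendsto (fun i => ∫ x, f i x ∂m) (@Filter.atTop ι pι) (𝓝 0) := by
  classical
  obtain ⟨Y, ⟨d, hd, hduc, ε, hε, hsep⟩, hY⟩ := h
  rw [HasMeasureZero] at hY
  push_neg at hY
  obtain ⟨ν, hfin, hsing, hνne⟩ := hY
  letI : MeasurableSpace X := cozMS X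
  letI : MeasurableSpace ↥Y := ⊤
  haveI : IsFiniteMeasure ν := hfin
  haveI : NullSingletonClass ν := ⟨hsing⟩
  -- Y is nonempty
  have hne' : Nonempty ↥Y := by
    by_contra hn
    rw [not_nonempty_iff] at hn
    exact hνne (by rw [Set.univ_eq_empty_iff.2 hn]; exact measure_empty)
  obtain ⟨y₀⟩ := hne'
  obtain ⟨hd0, hdsymm, hdnn, hdtri⟩ := hd
  have hd' : IsPseudometric d := ⟨hd0, hdsymm, hdnn, hdtri⟩
  set c : ℝ := 2 / ε with hc_def
  have hc : 0 < c := by positivity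
  set K : ℝ := 2 * c with hK_def
  have hK : 0 < K := by positivity
  -- the data
  set m : Measure X := ν.map Subtype.val with hm_def
  set dd : X → X → ℝ := fun x y => K * d x y with hdd_def
  set T : Finset ↥Y → Set X := fun F => Subtype.val '' (↑(insert y₀ F) : Set ↥Y) with hT_def
  set g : Set X → X → ℝ := fun S x => min 1 (c * distSet d S x) with hg_def
  set f : Finset ↥Y → X → ℝ := fun F x => g (T F) x - g Y x with hf_def
  have hYne : (Y : Set X).Nonempty := ⟨↑y₀, y₀.2⟩
  have hTne : ∀ F, (T F).Nonempty := fun F =>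
    ⟨↑y₀, ⟨y₀, by simp, rfl⟩⟩
  have hTY : ∀ F, T F ⊆ Y := by
    rintro F x ⟨y, -, rfl⟩
    exact y.2
  -- basic bounds on f
  have hmono : ∀ F x, distSet d Y x ≤ distSet d (T F) x := fun F x =>
    distSet_mono d hdnn (hTne F) (hTY F) x
  have hf_nonneg : ∀ F x, 0 ≤ f F x := by
    intro F x
    have : g Y x ≤ g (T F) x :=
      min_le_min le_rfl (mul_le_mul_of_nonneg_left (hmono F x) hc.le)
    simpa [hf_def] using this
  have hf_le : ∀ F x, f F x ≤ c * (distSet d (T F) x - distSet d Y x) := by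
    intro F x
    have h1 := min1_sub (c * distSet d (T F) x) (c * distSet d Y x)
    have h2 : c * distSet d Y x ≤ c * distSet d (T F) x :=
      mul_le_mul_of_nonneg_left (hmono F x) hc.le
    rw [abs_of_nonneg (by linarith)] at h1
    simp only [hf_def, hg_def]
    linarith
  -- f F is in Lip dd
  have hf_lip : ∀ F, f F ∈ Lip dd := by
    intro F
    constructor
    · intro x
      have h0 := hf_nonneg F x
      have h1 : g (T F) x ≤ 1 := min_le_left _ _
      have h2 : 0 ≤ g Y x := le_min zero_le_one
        (mul_nonneg hc.le (distSet_nonneg d hdnn hYne x))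
      rw [abs_of_nonneg h0]
      simp only [hf_def]
      linarith
    · intro x x'
      have hTl := abs_min1 (c * distSet d (T F) x) (c * distSet d (T F) x')
      have hYl := abs_min1 (c * distSet d Y x) (c * distSet d Y x')
      have hT2 : |c * distSet d (T F) x - c * distSet d (T F) x'| ≤ c * d x x' := by
        rw [← mul_sub, abs_mul, abs_of_pos hc]
        exact mul_le_mul_of_nonneg_left (distSet_abs d hd' (hTne F) x x') hc.le
      have hY2 : |c * distSet d Y x - c * distSet d Y x'| ≤ c * d x x' := by
        rw [← mul_sub, abs_mul, abs_of_pos hc]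
        exact mul_le_mul_of_nonneg_left (distSet_abs d hd' hYne x x') hc.le
      have habs : |f F x - f F x'| ≤
          |g (T F) x - g (T F) x'| + |g Y x - g Y x'| := by
        simp only [hf_def]
        have := abs_sub (g (T F) x - g (T F) x') (g Y x - g Y x')
        calc |g (T F) x - g Y x - (g (T F) x' - g Y x')|
            = |(g (T F) x - g (T F) x') - (g Y x - g Y x')| := by ring_nf
          _ ≤ |g (T F) x - g (T F) x'| + |g Y x - g Y x'| := abs_sub _ _
      have : |f F x - f F x'| ≤ c * d x x' + c * d x x' := by
        calc |f F x - f F x'| ≤ |g (T F) x - g (T F) x'| + |g Y x - g Y x'| := habs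
          _ ≤ c * d x x' + c * d x x' := by
              simp only [hg_def]
              exact add_le_add (le_trans hTl hT2) (le_trans hYl hY2)
      calc |f F x - f F x'| ≤ c * d x x' + c * d x x' := this
        _ = dd x x' := by simp only [hdd_def, hK_def]; ring
  -- f F is uniformly continuous and measurable
  have hf_uc : ∀ F, UniformContinuous (f F) := by
    intro F
    exact uc_of_lip_s7 hd' hduc hK (fun x y => (hf_lip F).2 x y)
  have hf_meas : ∀ F, Measurable (f F) := by
    intro F
    exact uc_measurable (hf_uc F) (fun x => (hf_lip F).1 x)
  -- integral value
  have hval : ∀ F, ∫ x, f F x ∂m = (ν Set.univ).toReal := by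
    intro F
    have hfj : ∀ y : ↥Y,
        f F ↑y = ((↑(insert y₀ F) : Set ↥Y)ᶜ).indicator (fun _ => (1 : ℝ)) y := by
      intro y
      have hgY : g Y ↑y = 0 := by
        have h1 : distSet d Y ↑y ≤ d ↑y ↑y := distSet_le d hdnn y.2 ↑y
        rw [hd0] at h1
        have h2 : 0 ≤ distSet d Y ↑y := distSet_nonneg d hdnn hYne ↑y
        have h3 : distSet d Y ↑y = 0 := le_antisymm h1 h2
        rw [show g Y ↑y = min 1 (c * distSet d Y ↑y) from rfl, h3, mul_zero]
        exact min_eq_right zero_le_one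
      by_cases hy : y ∈ insert y₀ F
      · have hmem : (↑y : X) ∈ T F := ⟨y, by simpa using hy, rfl⟩
        have h1 : distSet d (T F) ↑y ≤ d ↑y ↑y := distSet_le d hdnn hmem ↑y
        rw [hd0] at h1
        have h2 : 0 ≤ distSet d (T F) ↑y := distSet_nonneg d hdnn (hTne F) ↑y
        have h3 : distSet d (T F) ↑y = 0 := le_antisymm h1 h2
        have : f F ↑y = 0 := by
          rw [show f F ↑y = g (T F) ↑y - g Y ↑y from rfl, hgY, sub_zero,
            show g (T F) ↑y = min 1 (c * distSet d (T F) ↑y) from rfl, h3, mul_zero]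
          exact min_eq_right zero_le_one
        rw [this, Set.indicator_of_notMem (Set.notMem_compl_iff.2 (Finset.mem_coe.2 hy))]
      · have hdist : ε ≤ distSet d (T F) ↑y := by
          apply le_csInf ((hTne F).image _)
          rintro b ⟨x', ⟨y', hy', rfl⟩, rfl⟩
          have hyy' : y ≠ y' := by
            rintro rfl
            exact hy (by simpa using hy')
          exact hsep ↑y y.2 ↑y' y'.2 (fun hh => hyy' (Subtype.ext hh))
        have h1 : (1 : ℝ) ≤ c * distSet d (T F) ↑y := by
          have : c * ε ≤ c * distSet d (T F) ↑y := mul_le_mul_of_nonneg_left hdist hc.le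
          have hcε : c * ε = 2 := by
            rw [hc_def]; field_simp
          linarith
        have : f F ↑y = 1 := by
          rw [show f F ↑y = g (T F) ↑y - g Y ↑y from rfl, hgY, sub_zero]
          exact min_eq_left h1
        rw [this, Set.indicator_of_mem (Set.mem_compl (fun hcon => hy (Finset.mem_coe.1 hcon)))]
    have hms : MeasurableSet ((↑(insert y₀ F) : Set ↥Y)ᶜ) :=
      MeasurableSpace.measurableSet_top
    have := integral_map_indicator ν (measurable_from_top (f := (Subtype.val : ↥Y → X)))
      (hf_meas F) hms hfj
    rw [hm_def, this]
    congr 1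
    rw [measure_compl MeasurableSpace.measurableSet_top (measure_ne_top ν _),
      Set.Countable.measure_zero (Finset.countable_toSet _) ν, tsub_zero]
  -- final assembly
  refine ⟨m, ?_, dd, ?_, ?_, Finset ↥Y, inferInstance, inferInstance, ⟨∅⟩, f, hf_lip, ?_, ?_⟩
  · exact Measure.isFiniteMeasure_map ν _
  · exact ⟨fun x => by simp [hdd_def, hd0], fun x y => by simp [hdd_def, hdsymm x y],
      fun x y => mul_nonneg hK.le (hdnn x y),
      fun x y z => by
        have := hdtri x y z
        simp only [hdd_def]
        nlinarith⟩
  · have : (fun p : X × X => dd p.1 p.2) = fun p : X × X => K * d p.1 p.2 := rfl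
    rw [this]
    exact Real.uniformContinuous_const_mul.comp hduc
  · -- pointwise convergence
    intro x
    rw [Metric.tendsto_atTop]
    intro δ hδ
    have hδ' : 0 < δ / (2 * c) := by positivity
    have hlt : sInf ((d x) '' Y) < distSet d Y x + δ / (2 * c) :=
      lt_add_of_pos_right _ hδ'
    obtain ⟨b, ⟨y, hyY, rfl⟩, hb⟩ := exists_lt_of_csInf_lt (hYne.image _) hlt
    refine ⟨{⟨y, hyY⟩}, fun F hF => ?_⟩
    have hyF : (⟨y, hyY⟩ : ↥Y) ∈ insert y₀ F :=
      Finset.mem_insert_of_mem (Finset.singleton_subset_iff.1 hF)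
    have hmem : y ∈ T F := ⟨⟨y, hyY⟩, by simpa using hyF, rfl⟩
    have h1 : distSet d (T F) x ≤ d x y := distSet_le d hdnn hmem x
    have h2 := hf_le F x
    have h3 := hf_nonneg F x
    rw [Real.dist_eq, sub_zero, abs_of_nonneg h3]
    have : c * (distSet d (T F) x - distSet d Y x) < c * (δ / (2 * c)) := by
      apply mul_lt_mul_of_pos_left _ hc
      have : distSet d Y x = sInf ((d x) '' Y) := rfl
      linarith [this ▸ hb]
    have hcc : c * (δ / (2 * c)) = δ / 2 := by field_simp
    linarith
  · -- integral does not converge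
    intro hT
    rw [show (fun F => ∫ x, f F x ∂m) = fun _ => (ν Set.univ).toReal from funext hval] at hT
    haveI : Nonempty (Finset ↥Y) := ⟨∅⟩
    have := tendsto_nhds_unique hT tendsto_const_nhds
    exact ENNReal.toReal_ne_zero.2 ⟨hνne, measure_ne_top ν _⟩ this.symm
end

section
/- Let X be a uniform space and let S be a uniformly d-discrete collection of nonempty subsets of X for some uniformly continuous pseudometric d. Then for every subcollection S' ⊆ S, the union ⋃S' is open in the d-topology, and hence measurable in the σ-algebra generated by the cozero sets of X. Consequently, for any finite countably additive measure m on σ(Coz(X)), the map assigning to each subcollection S' ⊆ S the value m(⋃S') is a countably additive measure on the power set of S. -/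
open Filter MeasureTheory Topology Set

section Helpers14

variable {X : Type*}

theorem fS_lip14 (d : X → X → ℝ) (hd : IsPseudometric d) (A : Set X) (x y : X) :
    |fS d A x - fS d A y| ≤ d x y := by
  obtain ⟨hrefl, hsymm, hnn, htri⟩ := hd
  unfold fS
  by_cases hA : A.Nonempty
  · simp only [hA, if_pos]
    have hbdd : ∀ z : X, BddBelow ((d z) '' A) := fun z =>
      ⟨0, fun r ⟨a, _, ha⟩ => ha ▸ hnn z a⟩
    have key : ∀ u v : X, distSet d A u ≤ d u v + distSet d A v := by
      intro u v
      have : distSet d A u - d u v ≤ distSet d A v := by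
        apply le_csInf (hA.image _)
        rintro r ⟨a, haA, rfl⟩
        have h1 : distSet d A u ≤ d u a := csInf_le (hbdd u) ⟨a, haA, rfl⟩
        have := htri u v a
        linarith
      linarith
    have h1 : distSet d A x - distSet d A y ≤ d x y := by have := key x y; linarith
    have h2 : distSet d A y - distSet d A x ≤ d x y := by
      have := key y x; rw [hsymm y x] at this; linarith
    calc |min 1 (distSet d A x) - min 1 (distSet d A y)|
        ≤ max |(1:ℝ) - 1| |distSet d A x - distSet d A y| :=
          abs_min_sub_min_le_max 1 (distSet d A x) 1 (distSet d A y)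
      _ = |distSet d A x - distSet d A y| := by simp
      _ ≤ d x y := abs_sub_le_iff.mpr ⟨h1, h2⟩
  · simp only [hA, if_neg, not_false_iff, sub_self, abs_zero]
    exact hnn x y

theorem d_small14 [UniformSpace X] (d : X → X → ℝ) (hd : IsPseudometric d)
    (hdu : UniformContinuous fun p : X × X => d p.1 p.2) :
    ∀ ε : ℝ, 0 < ε → ∃ W ∈ uniformity X, ∀ x y : X, (x, y) ∈ W → d x y < ε := by
  intro ε hε
  obtain ⟨u, hu, h⟩ := mem_uniformity_of_uniformContinuous_invariant hdu
    (Metric.dist_mem_uniformity hε)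
  refine ⟨u, hu, fun x y hxy => ?_⟩
  have := h x y y hxy
  simp only [Set.mem_setOf_eq, Real.dist_eq, hd.1 y] at this
  have hnn := hd.2.2.1 x y
  calc d x y = |d x y - 0| := by rw [sub_zero, abs_of_nonneg hnn]
    _ < ε := this

theorem dopen_cozero14 [UniformSpace X] (d : X → X → ℝ) (hd : IsPseudometric d)
    (hdu : UniformContinuous fun p : X × X => d p.1 p.2) (U : Set X) (hU : DOpen d U) :
    IsCozero X U := by
  refine ⟨fS d Uᶜ, ?_, ⟨1, ?_⟩, ?_⟩
  · -- uniform continuity from the Lipschitz bound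
    rw [UniformContinuous, Metric.uniformity_basis_dist.tendsto_right_iff]
    intro ε hε
    obtain ⟨W, hW, hWd⟩ := d_small14 d hd hdu ε hε
    filter_upwards [hW] with p hp
    simp only [Set.mem_setOf_eq, Real.dist_eq]
    exact lt_of_le_of_lt (fS_lip14 d hd Uᶜ p.1 p.2) (hWd p.1 p.2 hp)
  · -- bounded by 1
    intro x
    unfold fS
    split_ifs with h
    · have h0 : (0:ℝ) ≤ distSet d Uᶜ x :=
        le_csInf (h.image _) (by rintro r ⟨a, -, rfl⟩; exact hd.2.2.1 x a)
      rw [abs_of_nonneg (le_min zero_le_one h0)]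
      exact min_le_left _ _
    · norm_num
  · -- U is the cozero set of fS d Uᶜ
    ext x
    simp only [Set.mem_setOf_eq]
    constructor
    · intro hx
      obtain ⟨ε, hε, hball⟩ := hU x hx
      unfold fS
      split_ifs with h
      · have hge : ε ≤ distSet d Uᶜ x := by
          apply le_csInf (h.image _)
          rintro r ⟨a, haU, rfl⟩
          by_contra hlt
          exact haU (hball a (not_le.mp hlt))
        have : 0 < min 1 (distSet d Uᶜ x) := lt_min one_pos (lt_of_lt_of_le hε hge)
        exact ne_of_gt this
      · norm_num
    · intro hfx
      by_contra hx
      apply hfx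
      unfold fS
      have hne : (Uᶜ : Set X).Nonempty := ⟨x, hx⟩
      rw [if_pos hne]
      have h0 : distSet d Uᶜ x = 0 := by
        apply le_antisymm
        · exact csInf_le ⟨0, by rintro r ⟨a, -, rfl⟩; exact hd.2.2.1 x a⟩
            ⟨x, hx, hd.1 x⟩
        · exact le_csInf (hne.image _) (by rintro r ⟨a, -, rfl⟩; exact hd.2.2.1 x a)
      rw [h0]; simp

end Helpers14

/-- unions of subcollections of a uniformly `d`-discrete collection of
nonempty `d`-open sets are `d`-open, hence measurable for `σ(Coz X)`; and
`S' ↦ m(⋃ S')` is countably additive on the power set of the collection. -/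
theorem discrete_family_measurable {X : Type u} [UniformSpace X] (d : X → X → ℝ)
    (hd : IsPseudometric d) (hdu : UniformContinuous fun p : X × X => d p.1 p.2)
    (S : Set (Set X)) (hne : ∀ V ∈ S, V.Nonempty) (hopen : ∀ V ∈ S, DOpen d V)
    (hdisc : ∃ δ > 0, ∀ V ∈ S, ∀ V' ∈ S, V ≠ V' → ∀ x ∈ V, ∀ x' ∈ V', δ ≤ d x x') :
    (∀ S' ⊆ S, DOpen d (⋃₀ S')) ∧
    (∀ S' ⊆ S, MeasurableSet[cozMS X] (⋃₀ S')) ∧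
    (∀ m : @MeasureTheory.Measure X (cozMS X),
      @MeasureTheory.IsFiniteMeasure X (cozMS X) m →
      ∀ F : ℕ → Set (Set X), (∀ n, F n ⊆ S) →
        (Pairwise fun n k => Disjoint (F n) (F k)) →
        m (⋃₀ ⋃ n, F n) = ∑' n, m (⋃₀ F n)) := by
  obtain ⟨δ, hδ, hδd⟩ := hdisc
  have hOpen : ∀ S' ⊆ S, DOpen d (⋃₀ S') := by
    intro S' hS' x hx
    obtain ⟨V, hVS', hxV⟩ := hx
    obtain ⟨ε, hε, hball⟩ := hopen V (hS' hVS') x hxV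
    exact ⟨ε, hε, fun y hy => ⟨V, hVS', hball y hy⟩⟩
  have hMeas : ∀ S' ⊆ S, MeasurableSet[cozMS X] (⋃₀ S') := fun S' hS' =>
    MeasurableSpace.measurableSet_generateFrom
      (dopen_cozero14 d hd hdu _ (hOpen S' hS'))
  refine ⟨hOpen, hMeas, ?_⟩
  intro m hm F hF hFd
  letI : MeasurableSpace X := cozMS X
  rw [Set.sUnion_iUnion]
  have hdisj : Pairwise (Function.onFun Disjoint fun n => ⋃₀ F n) := by
    intro n k hnk
    rw [Function.onFun, Set.disjoint_left]
    rintro x ⟨V, hVn, hxV⟩ ⟨V', hVk, hxV'⟩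
    have hVV' : V ≠ V' := by
      rintro rfl
      exact (hFd hnk).le_bot ⟨hVn, hVk⟩
    have := hδd V (hF n hVn) V' (hF k hVk) hVV' x hxV x hxV'
    rw [hd.1 x] at this
    linarith
  exact measure_iUnion hdisj fun n => hMeas (F n) (hF n)
end

section
/- Let X be a uniform space and μ ∈ M(X) a bounded linear functional on U_b(X) that is continuous on Lip(d) (pointwise topology) for every separable uniformly continuous pseudometric d on X. Then for every uniformly continuous pseudometric d (not necessarily separable) and every sequence f_n ∈ Lip(d) with f_n → 0 pointwise, μ(f_n) → 0. -/
open Filter MeasureTheory Topology Set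
open scoped Uniformity

/-- a bounded linear functional on `U_b(X)` continuous on `Lip d` for all
separable u.c. pseudometrics `d` is sequentially continuous on `Lip d` for all u.c.
pseudometrics `d`. -/
theorem cont_separable_to_seqCont {X : Type u} [UniformSpace X]
    (μ : (X → ℝ) →ₗ[ℝ] ℝ)
    (hbdd : ∃ C : ℝ, ∀ f : X → ℝ, UniformContinuous f → ∀ B : ℝ,
      (∀ x, |f x| ≤ B) → |μ f| ≤ C * B)
    (hcont : ∀ d : X → X → ℝ, IsPseudometric d →
      (UniformContinuous fun p : X × X => d p.1 p.2) → DSeparable d →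
      ∀ (ι : Type u) (pι : Preorder ι), IsDirected ι pι.le → Nonempty ι →
        ∀ f : ι → X → ℝ, (∀ i, f i ∈ Lip d) →
          (∀ x, Tendsto (fun i => f i x) (@Filter.atTop ι pι) (𝓝 0)) →
          Tendsto (fun i => μ (f i)) (@Filter.atTop ι pι) (𝓝 0))
    (d : X → X → ℝ) (hd : IsPseudometric d)
    (hdu : UniformContinuous fun p : X × X => d p.1 p.2)
    (f : ℕ → X → ℝ) (hf : ∀ n, f n ∈ Lip d)
    (h0 : ∀ x, Tendsto (fun n => f n x) atTop (𝓝 0)) :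
    Tendsto (fun n => μ (f n)) atTop (𝓝 0) := by
  classical
  rcases isEmpty_or_nonempty X with hX | hX
  · have hz : ∀ n, μ (f n) = 0 := by
      intro n
      have : f n = 0 := funext fun x => (hX.false x).elim
      rw [this, map_zero]
    simp only [hz]
    exact tendsto_const_nhds
  -- The map into bounded functions on ℕ
  set F : X → BoundedContinuousFunction ℕ ℝ := fun x =>
    ⟨⟨fun n => f n x, continuous_of_discreteTopology⟩, 2, fun a b => by
      have ha := (hf a).1 x; have hb := (hf b).1 x
      rw [Real.dist_eq]
      have := abs_sub (f a x) (f b x)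
      calc |f a x - f b x| ≤ |f a x| + |f b x| := abs_sub _ _
        _ ≤ 2 := by linarith⟩ with hFdef
  have hFapp : ∀ x n, F x n = f n x := fun x n => rfl
  have hdnn : ∀ x y, 0 ≤ d x y := hd.2.2.1
  have hLip' : ∀ x y, dist (F x) (F y) ≤ d x y := by
    intro x y
    rw [BoundedContinuousFunction.dist_le (hdnn x y)]
    intro n
    rw [hFapp, hFapp, Real.dist_eq]
    exact (hf n).2 x y
  -- d-small entourages
  have key : ∀ ε : ℝ, 0 < ε → {p : X × X | d p.1 p.2 < ε} ∈ 𝓤 X := by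
    intro ε hε
    have h1 : {r : ℝ × ℝ | dist r.1 r.2 < ε} ∈ 𝓤 ℝ := Metric.dist_mem_uniformity hε
    have h2 := Filter.mem_map.mp (hdu h1)
    rw [uniformity_prod] at h2
    obtain ⟨tA, htA, tB, htB, hS⟩ := Filter.mem_inf_iff.mp h2
    obtain ⟨A, hA, hAsub⟩ := Filter.mem_comap.mp htA
    obtain ⟨B, hB, hBsub⟩ := Filter.mem_comap.mp htB
    apply Filter.mem_of_superset (Filter.inter_mem hA hB)
    rintro ⟨x, y⟩ ⟨hxA, hxB⟩
    have hq : ((x, y), (y, y)) ∈ tA ∩ tB :=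
      ⟨hAsub hxA, hBsub (refl_mem_uniformity hB)⟩
    rw [← hS] at hq
    simp only [Set.mem_preimage, Set.mem_setOf_eq] at hq
    rw [hd.1 y, Real.dist_eq, sub_zero, abs_of_nonneg (hdnn x y)] at hq
    exact hq
  have hFuc : UniformContinuous F := by
    rw [UniformContinuous, Metric.uniformity_basis_dist.tendsto_right_iff]
    intro ε hε
    filter_upwards [key ε hε] with p hp
    exact lt_of_le_of_lt (hLip' p.1 p.2) hp
  have hduc' : UniformContinuous fun p : X × X => dist (F p.1) (F p.2) :=
    uniformContinuous_dist.comp (hFuc.prodMap hFuc)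
  have hpseudo : IsPseudometric (fun x y => dist (F x) (F y)) :=
    ⟨fun x => dist_self _, fun x y => dist_comm _ _, fun x y => dist_nonneg,
      fun x y z => dist_triangle _ _ _⟩
  have hLipmem : ∀ n, f n ∈ Lip (fun x y => dist (F x) (F y)) := by
    intro n
    refine ⟨(hf n).1, fun x x' => ?_⟩
    have := BoundedContinuousFunction.dist_coe_le_dist (f := F x) (g := F x') n
    rwa [hFapp, hFapp, Real.dist_eq] at this
  -- separability
  have hsep : DSeparable (fun x y => dist (F x) (F y)) := by
    set pick : (ℕ →₀ ℚ) × ℕ → X := fun i =>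
      if h : ∃ y, ∀ n, |f n y - ((i.1 n : ℚ) : ℝ)| < 1 / ((i.2 : ℝ) + 1) then h.choose
      else Classical.arbitrary X with hpick
    refine ⟨Set.range pick, Set.countable_range _, ?_⟩
    intro x ε hε
    obtain ⟨k, hk⟩ := exists_nat_one_div_lt (show (0:ℝ) < ε / 3 by positivity)
    have hk0 : (0:ℝ) < 1 / ((k : ℝ) + 1) := by positivity
    obtain ⟨N, hN⟩ := Metric.tendsto_atTop.mp (h0 x) _ hk0
    have hq : ∀ n, ∃ q : ℚ, (n < N → |f n x - (q : ℝ)| < 1 / ((k : ℝ) + 1)) ∧ (¬ n < N → q = 0) := by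
      intro n
      by_cases h : n < N
      · obtain ⟨q, hq⟩ := exists_rat_near (f n x) hk0
        exact ⟨q, fun _ => hq, fun h' => absurd h h'⟩
      · exact ⟨0, fun h' => absurd h' h, fun _ => rfl⟩
    choose g hg1 hg2 using hq
    set q : ℕ →₀ ℚ := Finsupp.onFinset (Finset.range N) g
      (fun n hn => Finset.mem_range.mpr (by by_contra h; exact hn (hg2 n h))) with hqdef
    have hqa : ∀ n, q n = g n := fun n => Finsupp.onFinset_apply
    have hP : ∀ n, |f n x - ((q n : ℚ) : ℝ)| < 1 / ((k : ℝ) + 1) := by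
      intro n
      rw [hqa]
      by_cases h : n < N
      · exact hg1 n h
      · rw [hg2 n h]
        push_cast
        rw [sub_zero]
        have := hN n (le_of_not_gt h)
        rwa [Real.dist_eq, sub_zero] at this
    have hex : ∃ y, ∀ n, |f n y - ((q n : ℚ) : ℝ)| < 1 / ((k : ℝ) + 1) := ⟨x, hP⟩
    refine ⟨pick (q, k), Set.mem_range_self _, ?_⟩
    have hpp : ∀ n, |f n (pick (q, k)) - ((q n : ℚ) : ℝ)| < 1 / ((k : ℝ) + 1) := by
      rw [hpick]
      simp only [dif_pos hex]
      exact hex.choose_spec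
    have hdle : dist (F x) (F (pick (q, k))) ≤ 2 / ((k : ℝ) + 1) := by
      rw [BoundedContinuousFunction.dist_le (by positivity)]
      intro n
      rw [hFapp, hFapp, Real.dist_eq]
      have h1 := hP n
      have h2 := hpp n
      have : |f n x - f n (pick (q, k))| ≤
          |f n x - ((q n : ℚ) : ℝ)| + |f n (pick (q, k)) - ((q n : ℚ) : ℝ)| := by
        rw [abs_sub_comm (f n (pick (q, k))) ((q n : ℚ) : ℝ)]
        exact abs_sub_le _ _ _
      have h3 : 2 / ((k : ℝ) + 1) = 1 / ((k : ℝ) + 1) + 1 / ((k : ℝ) + 1) := by ring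
      linarith
    calc dist (F x) (F (pick (q, k))) ≤ 2 / ((k : ℝ) + 1) := hdle
      _ < ε := by
        have : (0:ℝ) < (k : ℝ) + 1 := by positivity
        rw [div_lt_iff₀ this] at hk ⊢
        linarith
  -- apply the hypothesis with ι = ULift ℕ
  have hup : Tendsto (ULift.up.{u} : ℕ → ULift ℕ) atTop atTop :=
    Monotone.tendsto_atTop_atTop (fun _ _ h => h) (fun b => ⟨b.down, le_refl _⟩)
  have hdown : Tendsto (ULift.down.{u} : ULift ℕ → ℕ) atTop atTop :=
    Monotone.tendsto_atTop_atTop (fun _ _ h => h) (fun b => ⟨⟨b⟩, le_refl _⟩)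
  have hdir : IsDirected (ULift.{u} ℕ) (· ≤ ·) :=
    ⟨fun a b => ⟨⟨max a.down b.down⟩, le_max_left _ _, le_max_right _ _⟩⟩
  have hmain := hcont (fun x y => dist (F x) (F y)) hpseudo hduc' hsep
    (ULift.{u} ℕ) inferInstance hdir ⟨⟨0⟩⟩ (fun i => f i.down)
    (fun i => hLipmem i.down)
    (fun x => (h0 x).comp hdown)
  exact hmain.comp hup
end
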